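/- arXiv:math/0305131 — 9 statements merged into one kernel-verified Lean document; each statement's English description precedes it below -/
import Mathlib

section
/- For all real t with |t| < 1 and all complex z, sin(z·arctan(t))/(1+t²)^{z/2} = Σ_{k=0}^∞ (−1)^k (z)_{2k+1} t^{2k+1}/(2k+1)!, where (z)_n denotes the rising factorial (Pochhammer symbol). -/
open Real Complex

open Filter Finset

noncomputable def bc (a : ℂ) (n : ℕ) : ℂ := (∏ j ∈ Finset.range n, (a - j)) / n.factorial

lemma bc_zero (a : ℂ) : bc a 0 = 1 := by simp [bc]

lemma bc_succ (a : ℂ) (n : ℕ) : bc a (n + 1) = bc a n * ((a - n) / (n + 1)) := by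
  have h1 : ((n.factorial : ℂ)) ≠ 0 := Nat.cast_ne_zero.2 n.factorial_ne_zero
  have h2 : ((n : ℂ) + 1) ≠ 0 := Nat.cast_add_one_ne_zero n
  rw [bc, bc, Finset.prod_range_succ, Nat.factorial_succ]
  push_cast
  rw [div_mul_div_comm, mul_comm ((n:ℂ)+1) _]

lemma bc_norm_succ (a : ℂ) (n : ℕ) : ‖bc a (n+1)‖ = ‖bc a n‖ * (‖a - n‖ / (n + 1)) := by
  rw [bc_succ, norm_mul, norm_div]
  congr 2
  have : ((n:ℂ) + 1) = ((n + 1 : ℕ) : ℂ) := by push_cast; ring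
  rw [this, Complex.norm_natCast]
  push_cast; ring

lemma bc_S_summable (a : ℂ) {r : ℝ} (h0 : 0 < r) (h1 : r < 1) :
    Summable (fun n : ℕ => ‖bc a n‖ * (n + 1) * r ^ n) := by
  set B := ‖a‖ with hB
  have hB0 : 0 ≤ B := norm_nonneg a
  set δ := (1 - r) / 2 with hδ
  have hδ0 : 0 < δ := by rw [hδ]; linarith
  obtain ⟨N, hN⟩ := exists_nat_ge (2 * r * B / δ)
  apply summable_of_ratio_norm_eventually_le (r := r + δ) (by rw [hδ]; linarith)
  filter_upwards [eventually_ge_atTop N] with n hn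
  have hn' : (N : ℝ) ≤ n := Nat.cast_le.2 hn
  have key : 2 * r * B ≤ δ * ((n : ℝ) + 1) := by
    have : 2 * r * B ≤ δ * N := by
      rw [← div_le_iff₀' hδ0] at *
      · linarith [hN]
    nlinarith
  have hcn : (0:ℝ) ≤ ‖bc a n‖ := norm_nonneg _
  have hrn : (0:ℝ) < r ^ n := pow_pos h0 n
  have hann : ‖a - n‖ ≤ B + n := by
    calc ‖a - n‖ ≤ ‖a‖ + ‖(n:ℂ)‖ := norm_sub_le _ _
    _ = B + n := by rw [Complex.norm_natCast]
  rw [Real.norm_of_nonneg (by positivity), Real.norm_of_nonneg (by positivity)]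
  rw [bc_norm_succ]
  push_cast
  have main : ‖a - n‖ * ((n:ℝ) + 2) * r ≤ (r + δ) * (((n:ℝ) + 1) * ((n:ℝ) + 1)) := by
    nlinarith [mul_nonneg (mul_nonneg h0.le hB0) (by positivity : (0:ℝ) ≤ (n:ℝ) + 2),
      mul_le_mul_of_nonneg_right key (by positivity : (0:ℝ) ≤ (n:ℝ) + 2),
      mul_le_mul_of_nonneg_right hann (by positivity : (0:ℝ) ≤ ((n:ℝ)+2) * r)]
  calc ‖bc a n‖ * (‖a - n‖ / ((n:ℝ) + 1)) * ((n:ℝ) + 1 + 1) * r ^ (n + 1)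
      = (‖bc a n‖ * r ^ n / (((n:ℝ)+1) * ((n:ℝ)+1))) * (‖a - n‖ * ((n:ℝ) + 2) * r) * (((n:ℝ)+1)) := by
        field_simp; ring
    _ ≤ (‖bc a n‖ * r ^ n / (((n:ℝ)+1) * ((n:ℝ)+1))) * ((r + δ) * (((n:ℝ) + 1) * ((n:ℝ) + 1))) * (((n:ℝ)+1)) := by
        have h3 : (0:ℝ) ≤ ‖bc a n‖ * r ^ n / (((n:ℝ)+1) * ((n:ℝ)+1)) := by positivity
        gcongr
    _ = (r + δ) * (‖bc a n‖ * ((n:ℝ) + 1) * r ^ n) := by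
        field_simp

lemma bc_hasSum (a : ℂ) {w : ℂ} (hw : ‖w‖ < 1) :
    HasSum (fun n : ℕ => bc a n * w ^ n) ((1 + w) ^ a) := by
  set r : ℝ := (‖w‖ + 1) / 2 with hr
  have h0 : 0 < r := by positivity
  have hwr : ‖w‖ < r := by rw [hr]; linarith
  have h1 : r < 1 := by rw [hr]; linarith
  have hS := bc_S_summable a h0 h1
  set s : Set ℂ := Metric.ball (0 : ℂ) r with hs
  have hso : IsOpen s := Metric.isOpen_ball
  have hsc : Convex ℝ s := convex_ball 0 r
  have hsp : IsPreconnected s := hsc.isPreconnected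
  have h0s : (0 : ℂ) ∈ s := by simp [hs, h0]
  have hws : w ∈ s := by simpa [hs, Complex.dist_eq] using hwr
  have hmem : ∀ y ∈ s, ‖y‖ < r := by
    intro y hy; simpa [hs, Complex.dist_eq] using hy
  have hterm : ∀ y ∈ s, Summable (fun n : ℕ => bc a n * y ^ n) := by
    intro y hy
    apply Summable.of_norm_bounded hS
    intro n
    rw [norm_mul, norm_pow]
    calc ‖bc a n‖ * ‖y‖ ^ n ≤ ‖bc a n‖ * r ^ n := by
          gcongr; exact (hmem y hy).le
      _ ≤ ‖bc a n‖ * (n + 1) * r ^ n := by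
          nlinarith [mul_nonneg (mul_nonneg (norm_nonneg (bc a n))
            (Nat.cast_nonneg (α := ℝ) n)) (pow_pos h0 n).le]
  have hubound : ∀ n : ℕ, ∀ y ∈ s, ‖bc a n * ((n : ℂ) * y ^ (n - 1))‖
      ≤ (1 / r) * (‖bc a n‖ * (n + 1) * r ^ n) := by
    intro n y hy
    rw [norm_mul, norm_mul, norm_pow, Complex.norm_natCast]
    match n with
    | 0 => simp; positivity
    | (m + 1) =>
      simp only [Nat.add_sub_cancel]
      push_cast
      have h2 : ‖y‖ ^ m ≤ r ^ m := pow_le_pow_left₀ (norm_nonneg y) (hmem y hy).le m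
      have hb := norm_nonneg (bc a (m + 1))
      have hrm := (pow_pos h0 m).le
      have h3 : ‖bc a (m+1)‖ * (((m:ℝ) + 1) * ‖y‖ ^ m) ≤ ‖bc a (m+1)‖ * (((m:ℝ) + 1) * r ^ m) := by
        gcongr
      refine h3.trans ?_
      rw [pow_succ, div_mul_eq_mul_div, le_div_iff₀ h0]
      nlinarith [mul_nonneg (mul_nonneg hb hrm) h0.le]
  have hdsum : Summable (fun n : ℕ => (1 / r) * (‖bc a n‖ * (n + 1) * r ^ n)) := hS.mul_left _
  have hg0 : Summable (fun n : ℕ => bc a n * (0:ℂ) ^ n) := hterm 0 h0s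
  set F : ℂ → ℂ := fun y => ∑' n : ℕ, bc a n * y ^ n with hF
  set D : ℂ → ℂ := fun y => ∑' n : ℕ, bc a n * ((n : ℂ) * y ^ (n - 1)) with hD
  have hderiv : ∀ y ∈ s, HasDerivAt F (D y) y := by
    intro y hy
    exact hasDerivAt_tsum_of_isPreconnected hdsum hso hsp
      (fun n x _ => by simpa using (hasDerivAt_pow n x).const_mul (bc a n))
      hubound h0s hg0 hy
  have hdsummable : ∀ y ∈ s, Summable (fun n : ℕ => bc a n * ((n : ℂ) * y ^ (n - 1))) := by
    intro y hy
    exact Summable.of_norm_bounded hdsum (fun n => hubound n y hy)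
  have hcoef : ∀ (y : ℂ) (n : ℕ), bc a (n+1) * (((n:ℕ)+1 : ℂ) * y ^ n) = bc a n * (a - n) * y ^ n := by
    intro y n
    rw [bc_succ]
    have h2 : ((n : ℂ) + 1) ≠ 0 := Nat.cast_add_one_ne_zero n
    push_cast
    field_simp
  have hODE : ∀ y ∈ s, (1 + y) * D y = a * F y := by
    intro y hy
    have hsum := hdsummable y hy
    have e1 : D y = ∑' n : ℕ, bc a n * (a - n) * y ^ n := by
      have hDy : D y = ∑' n : ℕ, bc a n * ((n : ℂ) * y ^ (n - 1)) := rfl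
      rw [hDy, hsum.tsum_eq_zero_add]
      simp only [Nat.cast_zero, zero_mul, mul_zero, zero_add, Nat.add_sub_cancel]
      exact tsum_congr fun n => by push_cast [hcoef y n]; rfl
    have e2 : y * D y = ∑' n : ℕ, bc a n * (n : ℂ) * y ^ n := by
      have hDy : D y = ∑' n : ℕ, bc a n * ((n : ℂ) * y ^ (n - 1)) := rfl
      rw [hDy, ← tsum_mul_left]
      refine tsum_congr fun n => ?_
      match n with
      | 0 => simp
      | (m+1) => simp only [Nat.add_sub_cancel]; rw [pow_succ]; push_cast; ring
    have hs1 : Summable (fun n : ℕ => bc a n * (a - n) * y ^ n) := by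
      have h2 := (summable_nat_add_iff 1).2 hsum
      apply h2.congr
      intro n
      simp only [Nat.add_sub_cancel]
      push_cast [← hcoef y n]
      rfl
    have hs2 : Summable (fun n : ℕ => bc a n * (n : ℂ) * y ^ n) := by
      have h2 := hsum.mul_left y
      apply h2.congr
      intro n
      match n with
      | 0 => simp
      | (m+1) => simp only [Nat.add_sub_cancel]; rw [pow_succ]; push_cast; ring
    calc (1 + y) * D y = D y + y * D y := by ring
      _ = ∑' n : ℕ, (bc a n * (a - n) * y ^ n + bc a n * (n:ℂ) * y ^ n) := by
          rw [e2, e1]; exact (hs1.tsum_add hs2).symm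
      _ = ∑' n : ℕ, a * (bc a n * y ^ n) := tsum_congr fun n => by ring
      _ = a * F y := tsum_mul_left
  have h1y : ∀ y ∈ s, (0:ℝ) < (1 + y).re := by
    intro y hy
    have h2 : |y.re| ≤ ‖y‖ := Complex.abs_re_le_norm y
    have h3 := hmem y hy
    simp only [Complex.add_re, Complex.one_re]
    cases abs_le.1 h2 with | intro hl hr2 => linarith
  have h1yne : ∀ y ∈ s, (1 + y) ≠ 0 := by
    intro y hy h
    have h2 := h1y y hy
    rw [h] at h2; simp at h2
  set G : ℂ → ℂ := fun y => F y * (1 + y) ^ (-a) with hG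
  have hGd : ∀ y ∈ s, HasDerivAt G 0 y := by
    intro y hy
    have hcp : HasDerivAt (fun y : ℂ => (1 + y) ^ (-a)) (-a * (1 + y) ^ (-a - 1) * 1) y := by
      apply HasDerivAt.cpow_const
      · simpa using (hasDerivAt_id y).const_add 1
      · exact Or.inl (h1y y hy)
    have hmul := (hderiv y hy).mul hcp
    refine hmul.congr_deriv ?_
    have hsplit : (1 + y) ^ (-a) = (1 + y) ^ (-a - 1) * (1 + y) := by
      have h := Complex.cpow_add (-a - 1) 1 (h1yne y hy)
      rw [Complex.cpow_one] at h
      rw [← h]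
      congr 1
      ring
    rw [hsplit]
    have hode := hODE y hy
    linear_combination ((1 + y) ^ (-a - 1)) * hode
  have hGconst : G w = G 0 := by
    apply hsc.is_const_of_fderivWithin_eq_zero (𝕜 := ℂ) ?_ ?_ hws h0s
    · intro y hy
      exact (hGd y hy).differentiableAt.differentiableWithinAt
    · intro y hy
      have h2 : HasFDerivAt G (0 : ℂ →L[ℂ] ℂ) y := by
        have := (hGd y hy).hasFDerivAt
        rw [ContinuousLinearMap.toSpanSingleton_zero] at this
        exact this
      rw [fderivWithin_of_isOpen hso hy, h2.fderiv]
  have hF0 : F 0 = 1 := by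
    have hFy : F 0 = ∑' n : ℕ, bc a n * (0:ℂ) ^ n := rfl
    rw [hFy, tsum_eq_single 0 (fun n hn => by simp [zero_pow hn])]
    simp [bc_zero]
  have hG0 : G 0 = 1 := by
    have : G 0 = F 0 * (1 + 0 : ℂ) ^ (-a) := rfl
    rw [this, hF0]
    simp
  have hne : (1 + w) ≠ 0 := h1yne w hws
  have hinv : (1 + w) ^ (-a) * (1 + w) ^ a = 1 := by
    rw [← Complex.cpow_add _ _ hne]
    simp
  have key : F w * (1 + w) ^ (-a) = 1 := by
    have : G w = F w * (1 + w) ^ (-a) := rfl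
    rw [← this, hGconst, hG0]
  have hFw : F w = (1 + w) ^ a := by
    calc F w = F w * ((1 + w) ^ (-a) * (1 + w) ^ a) := by rw [hinv, mul_one]
      _ = F w * (1 + w) ^ (-a) * (1 + w) ^ a := by ring
      _ = (1 + w) ^ a := by rw [key, one_mul]
  have hfin := (hterm w hws).hasSum
  rw [show (∑' n : ℕ, bc a n * w ^ n) = F w from rfl, hFw] at hfin
  exact hfin

lemma ascP_eval (z : ℂ) (n : ℕ) :
    (ascPochhammer ℂ n).eval z = ∏ j ∈ Finset.range n, (z + j) := by
  induction n with
  | zero => simp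
  | succ m ih =>
    rw [ascPochhammer_succ_right, Finset.prod_range_succ, ← ih]
    simp [Polynomial.eval_mul]

lemma log_one_sub_mul_I (t : ℝ) :
    Complex.log (1 - t * I) = ((Real.log (1 + t ^ 2) / 2 : ℝ) : ℂ) - (Real.arctan t : ℂ) * I := by
  have hpos : (0:ℝ) < 1 + t ^ 2 := by positivity
  have hsq : (0:ℝ) < Real.sqrt (1 + t ^ 2) := Real.sqrt_pos.2 hpos
  set x : ℂ := ((Real.log (1 + t ^ 2) / 2 : ℝ) : ℂ) - (Real.arctan t : ℂ) * I with hx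
  have hre : x.re = Real.log (1 + t ^ 2) / 2 := by
    simp [hx, -Complex.ofReal_arctan]
  have him : x.im = -Real.arctan t := by
    simp [hx, -Complex.ofReal_arctan]
  have hexpre : Real.exp (Real.log (1 + t ^ 2) / 2) = Real.sqrt (1 + t ^ 2) := by
    rw [← Real.log_sqrt hpos.le, Real.exp_log hsq]
  have hexp : Complex.exp x = 1 - t * I := by
    rw [Complex.ext_iff]
    constructor
    · rw [Complex.exp_re, hre, him, hexpre, Real.cos_neg, Real.cos_arctan]
      have h2 : (1 - (t:ℂ) * I).re = 1 := by simp
      rw [h2]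
      field_simp
    · rw [Complex.exp_im, hre, him, hexpre, Real.sin_neg, Real.sin_arctan]
      have h2 : (1 - (t:ℂ) * I).im = -t := by simp
      rw [h2]
      field_simp
  rw [← hexp, Complex.log_exp]
  · rw [him]
    have := Real.arctan_lt_pi_div_two t
    have := Real.pi_pos
    linarith
  · rw [him]
    have := Real.neg_pi_div_two_lt_arctan t
    have := Real.pi_pos
    linarith

theorem sin_arctan_series (t : ℝ) (ht : |t| < 1) (z : ℂ) :
    Complex.sin (z * Real.arctan t) / ((1 + t ^ 2 : ℝ) : ℂ) ^ (z / 2) =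
      ∑' k : ℕ, (-1) ^ k * (ascPochhammer ℂ (2 * k + 1)).eval z * (t : ℂ) ^ (2 * k + 1) /
        (Nat.factorial (2 * k + 1) : ℂ) := by
  have hnorm : ‖(t:ℂ) * I‖ < 1 := by
    rw [norm_mul, Complex.norm_I, mul_one, Complex.norm_real, Real.norm_eq_abs]; exact ht
  have hnorm' : ‖-((t:ℂ) * I)‖ < 1 := by rw [norm_neg]; exact hnorm
  have h₁ := bc_hasSum (-z) hnorm'
  have h₂ := bc_hasSum (-z) hnorm
  have h := (h₁.sub h₂).div_const (2 * I)
  set f : ℕ → ℂ :=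
    fun n => (bc (-z) n * (-((t:ℂ) * I)) ^ n - bc (-z) n * ((t:ℂ) * I) ^ n) / (2 * I) with hf
  set S : ℂ := ((1 + -((t:ℂ) * I)) ^ (-z) - (1 + (t:ℂ) * I) ^ (-z)) / (2 * I) with hSdef
  have hbc : ∀ n : ℕ, bc (-z) n = (-1) ^ n * (ascPochhammer ℂ n).eval z / n.factorial := by
    intro n
    rw [bc, ascP_eval]
    congr 1
    calc ∏ j ∈ Finset.range n, (-z - (j:ℂ))
        = ∏ j ∈ Finset.range n, (-1) * (z + (j:ℂ)) := Finset.prod_congr rfl fun j _ => by ring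
      _ = (-1) ^ n * ∏ j ∈ Finset.range n, (z + (j:ℂ)) := by
          rw [Finset.prod_mul_distrib, Finset.prod_const, Finset.card_range]
  have h2I : (2 * I : ℂ) ≠ 0 := by simp [Complex.I_ne_zero]
  have hodd : ∀ k : ℕ, f (2 * k + 1) =
      (-1) ^ k * (ascPochhammer ℂ (2 * k + 1)).eval z * (t : ℂ) ^ (2 * k + 1) /
        (Nat.factorial (2 * k + 1) : ℂ) := by
    intro k
    have hI : ((t:ℂ) * I) ^ (2 * k + 1) = (-1) ^ k * (t:ℂ) ^ (2 * k + 1) * I := by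
      rw [mul_pow, pow_succ (I) (2*k), pow_mul, Complex.I_sq]
      ring
    have hI' : (-((t:ℂ) * I)) ^ (2 * k + 1) = -((-1) ^ k * (t:ℂ) ^ (2 * k + 1) * I) := by
      rw [Odd.neg_pow ⟨k, by ring⟩, hI]
    have hfact : ((Nat.factorial (2 * k + 1) : ℂ)) ≠ 0 :=
      Nat.cast_ne_zero.2 (Nat.factorial_ne_zero _)
    rw [hf]
    simp only
    rw [hbc (2 * k + 1), Odd.neg_one_pow ⟨k, by ring⟩, hI', hI]
    field_simp [hfact, Complex.I_ne_zero]
    ring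
  have heven : ∀ n : ℕ, n ∉ Set.range (fun k : ℕ => 2 * k + 1) → f n = 0 := by
    intro n hn
    have he : Even n := by
      rcases Nat.even_or_odd n with he | ho
      · exact he
      · exfalso; obtain ⟨m, hm⟩ := ho; exact hn ⟨m, hm.symm⟩
    rw [hf]
    simp only
    rw [Even.neg_pow he, sub_self, zero_div]
  have hinj : Function.Injective (fun k : ℕ => 2 * k + 1) := fun a b hab => by
    simpa using hab
  have hcomp : HasSum (fun k : ℕ => f (2 * k + 1)) S := (hinj.hasSum_iff heven).2 h
  have htarget : HasSum (fun k : ℕ => (-1) ^ k * (ascPochhammer ℂ (2 * k + 1)).eval z *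
      (t : ℂ) ^ (2 * k + 1) / (Nat.factorial (2 * k + 1) : ℂ)) S := by
    rwa [funext hodd] at hcomp
  rw [htarget.tsum_eq]
  -- now the closed form
  set L : ℝ := Real.log (1 + t ^ 2) with hL
  set sa : ℝ := Real.arctan t with hsa
  have hne₁ : (1 - (t:ℂ) * I) ≠ 0 := by
    intro hcon
    have := congrArg Complex.re hcon
    simp at this
  have hne₂ : (1 + (t:ℂ) * I) ≠ 0 := by
    intro hcon
    have := congrArg Complex.re hcon
    simp at this
  have hl₁ : Complex.log (1 - (t:ℂ) * I) = ((L / 2 : ℝ) : ℂ) - (sa : ℂ) * I :=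
    log_one_sub_mul_I t
  have hl₂ : Complex.log (1 + (t:ℂ) * I) = ((L / 2 : ℝ) : ℂ) + (sa : ℂ) * I := by
    have h2 := log_one_sub_mul_I (-t)
    rw [neg_sq, Real.arctan_neg] at h2
    simp only [Complex.ofReal_neg] at h2
    rw [show (1:ℂ) - -(t:ℂ) * I = 1 + (t:ℂ) * I by ring] at h2
    rw [h2]
    ring
  have hc₁ : (1 + -((t:ℂ) * I)) ^ (-z) = Complex.exp (-(z * (L:ℂ) / 2) + z * (sa:ℂ) * I) := by
    rw [show (1 + -((t:ℂ) * I)) = 1 - (t:ℂ) * I by ring,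
      Complex.cpow_def_of_ne_zero hne₁, hl₁]
    congr 1
    push_cast
    ring
  have hc₂ : (1 + (t:ℂ) * I) ^ (-z) = Complex.exp (-(z * (L:ℂ) / 2) - z * (sa:ℂ) * I) := by
    rw [Complex.cpow_def_of_ne_zero hne₂, hl₂]
    congr 1
    push_cast
    ring
  have hposx : (0:ℝ) < 1 + t ^ 2 := by positivity
  have hpow : ((1 + t ^ 2 : ℝ) : ℂ) ^ (z / 2) = Complex.exp (z * (L:ℂ) / 2) := by
    rw [Complex.cpow_def_of_ne_zero (by exact_mod_cast hposx.ne'),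
      ← Complex.ofReal_log hposx.le]
    congr 1
    rw [hL]
    push_cast
    ring
  rw [hSdef, hc₁, hc₂, hpow]
  simp only [Complex.sin]
  rw [show -(z * (sa:ℂ)) * I = -(z * (sa:ℂ) * I) by ring,
    sub_eq_add_neg (-(z * (L:ℂ) / 2)) (z * (sa:ℂ) * I)]
  simp only [Complex.exp_add, Complex.exp_neg]
  have hE := Complex.exp_ne_zero (z * (L:ℂ) / 2)
  have hA := Complex.exp_ne_zero (z * (sa:ℂ) * I)
  set X := Complex.exp (z * (sa:ℂ) * I)
  set V := Complex.exp (z * (L:ℂ) / 2)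
  field_simp
  linear_combination (1 - X ^ 2) * Complex.I_sq
end

section
/- For all real t with |t| < 1 and all complex z, cos(z·arctan(t))/(1+t²)^{z/2} = Σ_{k=0}^∞ (−1)^k (z)_{2k} t^{2k}/(2k)!, where (z)_n denotes the rising factorial. -/
open Real Complex Filter

namespace CosArctanAux

noncomputable def c (a : ℂ) (k : ℕ) : ℂ :=
  (-1) ^ k * (ascPochhammer ℂ k).eval a / k.factorial

lemma c_zero (a : ℂ) : c a 0 = 1 := by simp [c]

lemma c_succ (a : ℂ) (k : ℕ) : ((k : ℂ) + 1) * c a (k + 1) = -(a + k) * c a k := by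
  have hk : ((k.factorial : ℂ)) ≠ 0 := Nat.cast_ne_zero.mpr k.factorial_ne_zero
  have hk1 : ((k : ℂ) + 1) ≠ 0 := by
    exact_mod_cast (Nat.cast_add_one_ne_zero (R := ℂ) k)
  simp only [c, ascPochhammer_succ_eval, Nat.factorial_succ, pow_succ, Nat.cast_mul,
    Nat.cast_add, Nat.cast_one]
  field_simp

lemma norm_k1 (k : ℕ) : ‖((k : ℂ) + 1)‖ = (k : ℝ) + 1 := by
  rw [show ((k : ℂ) + 1) = ((k + 1 : ℕ) : ℂ) by push_cast; ring, Complex.norm_natCast]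
  push_cast; ring

lemma norm_c_succ (a : ℂ) (k : ℕ) :
    ‖c a (k + 1)‖ * ((k : ℝ) + 1) = ‖a + k‖ * ‖c a k‖ := by
  have h := congrArg norm (c_succ a k)
  rw [norm_mul, norm_mul, norm_neg, norm_k1] at h
  linarith [h]

lemma tendsto_norm_ratio (a : ℂ) :
    Tendsto (fun k : ℕ => ‖a + (k : ℂ)‖ / ((k : ℝ) + 1)) atTop (nhds 1) := by
  have h0 : Tendsto (fun k : ℕ => ‖a - 1‖ / ((k : ℝ) + 1)) atTop (nhds 0) := by
    have h2 := (tendsto_const_div_atTop_nhds_zero_nat ‖a - 1‖).comp (tendsto_add_atTop_nat 1)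
    refine h2.congr (fun k => ?_)
    simp [Function.comp]
  have hlo : Tendsto (fun k : ℕ => 1 - ‖a - 1‖ / ((k : ℝ) + 1)) atTop (nhds 1) := by
    simpa using (tendsto_const_nhds (x := (1:ℝ))).sub h0
  have hhi : Tendsto (fun k : ℕ => 1 + ‖a - 1‖ / ((k : ℝ) + 1)) atTop (nhds 1) := by
    simpa using (tendsto_const_nhds (x := (1:ℝ))).add h0
  refine tendsto_of_tendsto_of_tendsto_of_le_of_le hlo hhi (fun k => ?_) (fun k => ?_)
  · have hkp : (0:ℝ) < (k : ℝ) + 1 := by positivity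
    have key : (k : ℝ) + 1 - ‖a - 1‖ ≤ ‖a + (k : ℂ)‖ := by
      have h3 : ‖((k : ℂ) + 1)‖ - ‖1 - a‖ ≤ ‖((k : ℂ) + 1) - (1 - a)‖ := norm_sub_norm_le _ _
      rw [norm_k1, norm_sub_rev] at h3
      calc (k : ℝ) + 1 - ‖a - 1‖ ≤ ‖((k : ℂ) + 1) - (1 - a)‖ := h3
        _ = ‖a + (k : ℂ)‖ := by congr 1; ring
    calc 1 - ‖a - 1‖ / ((k : ℝ) + 1) = ((k : ℝ) + 1 - ‖a - 1‖) / ((k : ℝ) + 1) := by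
          rw [sub_div, div_self hkp.ne']
      _ ≤ ‖a + (k : ℂ)‖ / ((k : ℝ) + 1) := by gcongr
  · have hkp : (0:ℝ) < (k : ℝ) + 1 := by positivity
    have key : ‖a + (k : ℂ)‖ ≤ ‖a - 1‖ + ((k : ℝ) + 1) := by
      have h3 : ‖(a - 1) + ((k : ℂ) + 1)‖ ≤ ‖a - 1‖ + ‖((k : ℂ) + 1)‖ := norm_add_le _ _
      rw [norm_k1] at h3
      calc ‖a + (k : ℂ)‖ = ‖(a - 1) + ((k : ℂ) + 1)‖ := by congr 1; ring
        _ ≤ ‖a - 1‖ + ((k : ℝ) + 1) := h3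
    calc ‖a + (k : ℂ)‖ / ((k : ℝ) + 1) ≤ (‖a - 1‖ + ((k : ℝ) + 1)) / ((k : ℝ) + 1) := by gcongr
      _ = 1 + ‖a - 1‖ / ((k : ℝ) + 1) := by rw [add_div, div_self hkp.ne']; ring

lemma summable_v (a : ℂ) {ρ : ℝ} (h0 : 0 ≤ ρ) (h1 : ρ < 1) :
    Summable (fun k : ℕ => ‖c a k‖ * ((k : ℝ) + 1) * ρ ^ k) := by
  by_cases hz : ∃ K, c a K = 0
  · obtain ⟨K, hK⟩ := hz
    have hzero : ∀ k, K ≤ k → c a k = 0 := by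
      intro k hk
      induction k with
      | zero => simpa [Nat.le_zero.mp hk] using hK
      | succ n ih =>
        rcases Nat.lt_or_ge K (n + 1) with h | h
        · have hn := ih (Nat.lt_succ_iff.mp h)
          have h' := c_succ a n
          rw [hn, mul_zero] at h'
          have hk1 : ((n : ℂ) + 1) ≠ 0 := by
            exact_mod_cast (Nat.cast_add_one_ne_zero (R := ℂ) n)
          rcases mul_eq_zero.mp h' with h'' | h''
          · exact absurd h'' hk1
          · exact h''
        · have : K = n + 1 := le_antisymm hk h
          rwa [← this]
    refine summable_of_ne_finset_zero (s := Finset.range K) (fun k hk => ?_)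
    rw [Finset.mem_range, not_lt] at hk
    rw [hzero k hk]
    simp
  · push_neg at hz
    rcases eq_or_lt_of_le h0 with hρ0 | hρ0
    · refine summable_of_ne_finset_zero (s := Finset.range 1) (fun k hk => ?_)
      rw [Finset.mem_range, not_lt] at hk
      rw [← hρ0, zero_pow (by omega)]
      ring
    · refine summable_of_ratio_test_tendsto_lt_one h1 ?_ ?_
      · filter_upwards with k
        have hc : ‖c a k‖ ≠ 0 := norm_ne_zero_iff.mpr (hz k)
        positivity
      · have hmain : Tendsto (fun k : ℕ =>
            ρ * (‖a + (k : ℂ)‖ / ((k : ℝ) + 1)) * (((k : ℝ) + 2) / ((k : ℝ) + 1)))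
            atTop (nhds ρ) := by
          have h2 : Tendsto (fun k : ℕ => ((k : ℝ) + 2) / ((k : ℝ) + 1)) atTop (nhds 1) := by
            have h3 : Tendsto (fun k : ℕ => 1 + 1 / ((k : ℝ) + 1)) atTop (nhds 1) := by
              simpa using (tendsto_const_nhds (x := (1:ℝ))).add
                tendsto_one_div_add_atTop_nhds_zero_nat
            refine h3.congr (fun k => ?_)
            have hkp : ((k : ℝ) + 1) ≠ 0 := by positivity
            field_simp
            ring
          have := ((tendsto_norm_ratio a).const_mul ρ).mul h2
          simpa using this
        refine hmain.congr (fun k => ?_)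
        have hc : ‖c a k‖ ≠ 0 := norm_ne_zero_iff.mpr (hz k)
        have hkp : ((k : ℝ) + 1) ≠ 0 := by positivity
        have hρk : ρ ^ k ≠ 0 := (pow_pos hρ0 k).ne'
        have hρ : ρ ≠ 0 := hρ0.ne'
        have hrec := norm_c_succ a k
        have hnum : ‖c a (k + 1)‖ = ‖a + k‖ * ‖c a k‖ / ((k : ℝ) + 1) := by
          rw [eq_div_iff hkp]; linarith [hrec]
        have hcpos : 0 < ‖c a k‖ := (norm_nonneg _).lt_of_ne' hc
        have hd : ‖c a k‖ * ((k : ℝ) + 1) * ρ ^ k ≠ 0 := by positivity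
        rw [Real.norm_of_nonneg (by positivity), Real.norm_of_nonneg (by positivity),
          hnum, pow_succ]
        push_cast
        rw [eq_div_iff hd]
        field_simp
        ring

lemma hasSum_binom (a w : ℂ) (hw : ‖w‖ < 1) :
    HasSum (fun k : ℕ => c a k * w ^ k) ((1 + w) ^ (-a)) := by
  set ρ : ℝ := (1 + ‖w‖) / 2 with hρdef
  have hρ0 : 0 < ρ := by positivity
  have hρ1 : ρ < 1 := by simp only [hρdef]; linarith
  have hwρ : ‖w‖ < ρ := by simp only [hρdef]; linarith
  have hv := summable_v a hρ0.le hρ1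
  -- derivative bound
  set u : ℕ → ℝ := fun k => ‖c a k‖ * k * ρ ^ (k - 1) with hudef
  have hu : Summable u := by
    refine Summable.of_nonneg_of_le (fun k => by positivity) (fun k => ?_)
      (hv.mul_left ρ⁻¹)
    match k with
    | 0 => simp [hudef]; positivity
    | (j + 1) =>
      simp only [hudef]
      have : ρ⁻¹ * (‖c a (j+1)‖ * ((j+1 : ℕ) + 1) * ρ ^ (j+1))
          = ‖c a (j+1)‖ * ((j : ℝ) + 2) * ρ ^ j := by
        rw [pow_succ]
        push_cast
        field_simp
        ring
      rw [this]
      push_cast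
      calc ‖c a (j+1)‖ * ((j:ℝ) + 1) * ρ ^ (j + 1 - 1)
          = ‖c a (j+1)‖ * ρ ^ j * ((j:ℝ) + 1) := by norm_num; ring
        _ ≤ ‖c a (j+1)‖ * ρ ^ j * ((j:ℝ) + 2) := by
            refine mul_le_mul_of_nonneg_left (by linarith) (by positivity)
        _ = ‖c a (j+1)‖ * ((j:ℝ) + 2) * ρ ^ j := by ring
  -- summability of the series on the closed ball of radius ρ' := ‖w‖, and at w
  have hSw : Summable fun k => c a k * w ^ k := by
    refine Summable.of_norm_bounded hv (fun k => ?_)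
    rw [norm_mul, norm_pow]
    have h1 : ‖w‖ ^ k ≤ ρ ^ k := pow_le_pow_left₀ (norm_nonneg w) hwρ.le k
    have h2 : (1:ℝ) ≤ (k : ℝ) + 1 := by
      have := Nat.cast_nonneg (α := ℝ) k; linarith
    calc ‖c a k‖ * ‖w‖ ^ k ≤ ‖c a k‖ * ρ ^ k := mul_le_mul_of_nonneg_left h1 (norm_nonneg _)
      _ = ‖c a k‖ * ρ ^ k * 1 := by ring
      _ ≤ ‖c a k‖ * ρ ^ k * ((k : ℝ) + 1) := mul_le_mul_of_nonneg_left h2 (by positivity)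
      _ = ‖c a k‖ * ((k : ℝ) + 1) * ρ ^ k := by ring
  -- derivative of each term
  set g' : ℕ → ℂ → ℂ := fun k y => c a k * (k * y ^ (k - 1)) with hg'def
  have hg : ∀ k y, y ∈ Metric.ball (0:ℂ) ρ → HasDerivAt (fun y => c a k * y ^ k) (g' k y) y :=
    fun k y _ => (hasDerivAt_pow k y).const_mul (c a k)
  have hgbound : ∀ k y, y ∈ Metric.ball (0:ℂ) ρ → ‖g' k y‖ ≤ u k := by
    intro k y hy
    rw [Metric.mem_ball, dist_zero_right] at hy
    simp only [hg'def, hudef, norm_mul, norm_pow, Complex.norm_natCast]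
    have h1 : ‖y‖ ^ (k - 1) ≤ ρ ^ (k - 1) := pow_le_pow_left₀ (norm_nonneg y) hy.le _
    calc ‖c a k‖ * ((k : ℝ) * ‖y‖ ^ (k - 1))
        = ‖c a k‖ * (k : ℝ) * ‖y‖ ^ (k - 1) := by ring
      _ ≤ ‖c a k‖ * (k : ℝ) * ρ ^ (k - 1) :=
          mul_le_mul_of_nonneg_left h1 (by positivity)
  have hg0 : Summable fun k => c a k * (0:ℂ) ^ k := by
    refine summable_of_ne_finset_zero (s := Finset.range 1) (fun k hk => ?_)
    rw [Finset.mem_range, not_lt] at hk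
    rw [zero_pow (by omega)]
    ring
  set f : ℂ → ℂ := fun y => ∑' k, c a k * y ^ k with hfdef
  have hfD : ∀ y ∈ Metric.ball (0:ℂ) ρ, HasDerivAt f (∑' k, g' k y) y := by
    intro y hy
    exact hasDerivAt_tsum_of_isPreconnected hu Metric.isOpen_ball
      (convex_ball (0:ℂ) ρ).isPreconnected hg hgbound
      (Metric.mem_ball_self hρ0) hg0 hy
  -- summability at any point of the ball
  have hSball : ∀ y : ℂ, ‖y‖ < ρ → Summable fun k => c a k * y ^ k := by
    intro y hy
    refine Summable.of_norm_bounded hv (fun k => ?_)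
    rw [norm_mul, norm_pow]
    have h1 : ‖y‖ ^ k ≤ ρ ^ k := pow_le_pow_left₀ (norm_nonneg y) hy.le k
    have h2 : (1:ℝ) ≤ (k : ℝ) + 1 := by
      have := Nat.cast_nonneg (α := ℝ) k; linarith
    calc ‖c a k‖ * ‖y‖ ^ k ≤ ‖c a k‖ * ρ ^ k := mul_le_mul_of_nonneg_left h1 (norm_nonneg _)
      _ = ‖c a k‖ * ρ ^ k * 1 := by ring
      _ ≤ ‖c a k‖ * ρ ^ k * ((k : ℝ) + 1) := mul_le_mul_of_nonneg_left h2 (by positivity)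
      _ = ‖c a k‖ * ((k : ℝ) + 1) * ρ ^ k := by ring
  -- the ODE : (1+y) * f'(y) = -a * f(y)
  have hODE : ∀ y : ℂ, y ∈ Metric.ball (0:ℂ) ρ → (1 + y) * (∑' k, g' k y) = -a * f y := by
    intro y hy
    rw [Metric.mem_ball, dist_zero_right] at hy
    have hS : Summable fun k => c a k * y ^ k := hSball y hy
    have hS' : Summable fun k => g' k y :=
      Summable.of_norm_bounded hu (fun k => hgbound k y (by simpa [Metric.mem_ball, dist_zero_right] using hy))
    -- shift
    have hshift : ∑' k, g' k y = ∑' k : ℕ, ((k : ℂ) + 1) * c a (k + 1) * y ^ k := by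
      rw [Summable.tsum_eq_zero_add hS']
      simp only [hg'def]
      rw [show (c a 0 * ((0:ℕ) * y ^ (0 - 1)) : ℂ) = 0 by simp]
      rw [zero_add]
      congr 1
      funext k
      push_cast
      ring_nf
    have hSsh : Summable fun k : ℕ => ((k : ℂ) + 1) * c a (k + 1) * y ^ k := by
      have := (summable_nat_add_iff 1).mpr hS'
      refine this.congr (fun k => ?_)
      simp only [hg'def]
      push_cast
      ring_nf
    have hymul : y * (∑' k, g' k y) = ∑' k : ℕ, (k : ℂ) * c a k * y ^ k := by
      rw [← tsum_mul_left]
      congr 1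
      funext k
      match k with
      | 0 => simp [hg'def]
      | (j+1) =>
        simp only [hg'def]
        push_cast
        rw [pow_succ]
        ring
    have hSy : Summable fun k : ℕ => (k : ℂ) * c a k * y ^ k := by
      have := hS'.mul_left y
      refine this.congr (fun k => ?_)
      match k with
      | 0 => simp [hg'def]
      | (j+1) =>
        simp only [hg'def]
        push_cast
        rw [pow_succ]
        ring
    rw [add_mul, one_mul, hymul, hshift, ← Summable.tsum_add hSsh hSy]
    rw [hfdef]
    simp only
    rw [← tsum_mul_left]
    congr 1
    funext k
    have hrec := c_succ a k
    calc ((k : ℂ) + 1) * c a (k + 1) * y ^ k + (k : ℂ) * c a k * y ^ k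
        = (((k : ℂ) + 1) * c a (k + 1) + (k : ℂ) * c a k) * y ^ k := by ring
      _ = (-(a + k) * c a k + (k : ℂ) * c a k) * y ^ k := by rw [hrec]
      _ = -a * (c a k * y ^ k) := by ring
  -- F := f * (1+·)^a has zero derivative on the ball
  have hF : ∀ y ∈ Metric.ball (0:ℂ) ρ,
      HasDerivAt (fun y => f y * (1 + y) ^ a) 0 y := by
    intro y hy
    have hy' : ‖y‖ < ρ := by simpa [Metric.mem_ball, dist_zero_right] using hy
    have hre : (0:ℝ) < (1 + y).re := by
      have h1 : |y.re| ≤ ‖y‖ := Complex.abs_re_le_norm y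
      have h2 := (abs_lt.mp (lt_of_le_of_lt h1 (hy'.trans hρ1))).1
      simp only [Complex.add_re, Complex.one_re]
      linarith
    have hslit : (1 + y) ∈ Complex.slitPlane := Or.inl hre
    have hne : (1 + y) ≠ 0 := by
      intro h; rw [h] at hre; simp at hre
    have hcpow : HasDerivAt (fun y : ℂ => (1 + y) ^ a) (a * (1 + y) ^ (a - 1) * 1) y :=
      HasDerivAt.cpow_const ((hasDerivAt_id y).const_add 1) hslit
    have hmul := (hfD y hy).mul hcpow
    have hpow : (1 + y) ^ a = (1 + y) ^ (a - 1) * (1 + y) := by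
      calc (1 + y) ^ a = (1 + y) ^ (a - 1 + 1) := by rw [sub_add_cancel]
        _ = (1 + y) ^ (a - 1) * (1 + y) ^ (1 : ℂ) := Complex.cpow_add _ _ hne
        _ = (1 + y) ^ (a - 1) * (1 + y) := by rw [Complex.cpow_one]
    have h0 : (∑' k, g' k y) * (1 + y) ^ a + f y * (a * (1 + y) ^ (a - 1) * 1) = 0 := by
      rw [hpow]
      have hode := hODE y hy
      linear_combination ((1 + y) ^ (a - 1)) * hode
    exact h0 ▸ hmul
  -- F is constant on the ball
  have hzero : (ContinuousLinearMap.toSpanSingleton ℂ (0:ℂ)).restrictScalars ℝ = 0 := by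
    ext v; simp
  have key : ∀ x ∈ Metric.ball (0:ℂ) ρ,
      ‖f x * (1 + x) ^ a - f 0 * (1 + 0) ^ a‖ ≤ 0 * ‖x - 0‖ := by
    intro x hx
    exact (convex_ball (0:ℂ) ρ).norm_image_sub_le_of_norm_hasFDerivWithin_le
      (f := fun y => f y * (1 + y) ^ a) (f' := fun _ => 0)
      (fun y hy => by
        have := ((hF y hy).hasFDerivAt.restrictScalars ℝ).hasFDerivWithinAt
          (s := Metric.ball (0:ℂ) ρ)
        rwa [hzero] at this)
      (fun y _ => by simp) (Metric.mem_ball_self hρ0) hx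
  have hwball : w ∈ Metric.ball (0:ℂ) ρ := by
    simpa [Metric.mem_ball, dist_zero_right] using hwρ
  have hconst : f w * (1 + w) ^ a = f 0 * (1 + 0) ^ a := by
    have h4 := key w hwball
    rw [zero_mul] at h4
    exact sub_eq_zero.mp (norm_le_zero_iff.mp h4)
  have hf0 : f 0 = 1 := by
    rw [hfdef]
    simp only
    rw [tsum_eq_single 0 (fun k hk => by rw [zero_pow hk]; ring)]
    simp [c_zero]
  have hone : f w * (1 + w) ^ a = 1 := by
    rw [hconst, hf0, add_zero, Complex.one_cpow, one_mul]
  have hfw : f w = (1 + w) ^ (-a) := by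
    rw [Complex.cpow_neg]
    exact eq_inv_of_mul_eq_one_left hone
  have := hSw.hasSum
  rwa [show (∑' k, c a k * w ^ k) = (1 + w) ^ (-a) from hfw] at this

end CosArctanAux

theorem cos_arctan_series (t : ℝ) (ht : |t| < 1) (z : ℂ) :
    Complex.cos (z * Real.arctan t) / ((1 + t ^ 2 : ℝ) : ℂ) ^ (z / 2) =
      ∑' k : ℕ, (-1) ^ k * (ascPochhammer ℂ (2 * k)).eval z * (t : ℂ) ^ (2 * k) /
        (Nat.factorial (2 * k) : ℂ) := by
  have hnorm : ‖(t : ℂ) * Complex.I‖ < 1 := by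
    rw [norm_mul, Complex.norm_I, mul_one, Complex.norm_real, Real.norm_eq_abs]; exact ht
  have hnorm' : ‖-((t : ℂ) * Complex.I)‖ < 1 := by rwa [norm_neg]
  have S1 := CosArctanAux.hasSum_binom z ((t : ℂ) * Complex.I) hnorm
  have S2 := CosArctanAux.hasSum_binom z (-((t : ℂ) * Complex.I)) hnorm'
  rw [show (1 : ℂ) + -((t : ℂ) * Complex.I) = 1 - (t : ℂ) * Complex.I by ring] at S2
  have Scomb := (S1.add S2).div_const 2
  set V : ℂ := ((1 + (t : ℂ) * Complex.I) ^ (-z) + (1 - (t : ℂ) * Complex.I) ^ (-z)) / 2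
    with hVdef
  have hvanish : ∀ x ∉ Set.range (fun k : ℕ => 2 * k),
      (CosArctanAux.c z x * ((t : ℂ) * Complex.I) ^ x
        + CosArctanAux.c z x * (-((t : ℂ) * Complex.I)) ^ x) / 2 = 0 := by
    intro x hx
    have hodd : Odd x := by
      rcases Nat.even_or_odd x with he | ho
      · obtain ⟨r, hr⟩ := he
        exact absurd ⟨r, show 2 * r = x by omega⟩ hx
      · exact ho
    rw [hodd.neg_pow]
    ring
  have hinj : Function.Injective (fun k : ℕ => 2 * k) := fun a b h => by
    simpa using h
  have heven := (Function.Injective.hasSum_iff hinj hvanish).mpr Scomb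
  simp only [Function.comp_def] at heven
  have hfun : ∀ k : ℕ,
      (CosArctanAux.c z (2 * k) * ((t : ℂ) * Complex.I) ^ (2 * k)
        + CosArctanAux.c z (2 * k) * (-((t : ℂ) * Complex.I)) ^ (2 * k)) / 2
      = (-1) ^ k * (ascPochhammer ℂ (2 * k)).eval z * (t : ℂ) ^ (2 * k) /
        (Nat.factorial (2 * k) : ℂ) := by
    intro k
    have he : Even (2 * k) := even_two_mul k
    rw [he.neg_pow]
    rw [CosArctanAux.c]
    rw [mul_pow, pow_mul ((t : ℂ)) 2 k, pow_mul Complex.I 2 k, Complex.I_sq,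
      pow_mul (-1 : ℂ) 2 k, ← pow_mul ((t : ℂ)) 2 k]
    norm_num
    ring
  have Hfinal : HasSum (fun k : ℕ => (-1) ^ k * (ascPochhammer ℂ (2 * k)).eval z *
      (t : ℂ) ^ (2 * k) / (Nat.factorial (2 * k) : ℂ)) V := by
    rwa [funext hfun] at heven
  rw [Hfinal.tsum_eq]
  -- now compute V
  set A : ℝ := Real.arctan t with hAdef
  set L : ℝ := Real.log (1 + t ^ 2) with hLdef
  have h1t : (0 : ℝ) < 1 + t ^ 2 := by positivity
  have habs : ‖(1 + (t : ℂ) * Complex.I)‖ = Real.sqrt (1 + t ^ 2) := by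
    rw [show (1 + (t : ℂ) * Complex.I) = ((1 : ℝ) : ℂ) + (t : ℝ) * Complex.I by norm_num,
      Complex.norm_def, Complex.normSq_add_mul_I]
    norm_num
  have hre : (0 : ℝ) < (1 + (t : ℂ) * Complex.I).re := by simp
  have hne1 : (1 + (t : ℂ) * Complex.I) ≠ 0 := by
    intro h; rw [h] at hre; simp at hre
  have harg : Complex.arg (1 + (t : ℂ) * Complex.I) = A := by
    have hlt := Complex.abs_arg_lt_pi_div_two_iff.mpr (Or.inl hre)
    have htan := Complex.tan_arg (1 + (t : ℂ) * Complex.I)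
    rw [show ((1 : ℂ) + (t : ℂ) * Complex.I).im = t by simp,
      show ((1 : ℂ) + (t : ℂ) * Complex.I).re = 1 by simp, div_one] at htan
    have h2 := Real.arctan_tan (abs_lt.mp hlt).1 (abs_lt.mp hlt).2
    rw [htan] at h2
    rw [hAdef]
    exact h2.symm
  have hargne : Complex.arg (1 + (t : ℂ) * Complex.I) ≠ π := by
    rw [harg]
    intro h
    have h1 := Real.arctan_lt_pi_div_two t
    rw [hAdef] at h
    rw [h] at h1
    linarith [Real.pi_pos]
  have hlog1 : Complex.log (1 + (t : ℂ) * Complex.I) = ((L / 2 : ℝ) : ℂ) + (A : ℂ) * Complex.I := by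
    rw [Complex.log, habs, harg, Real.log_sqrt h1t.le]
  have hconj : (1 - (t : ℂ) * Complex.I) = (starRingEnd ℂ) (1 + (t : ℂ) * Complex.I) := by
    rw [map_add, map_mul, Complex.conj_I, Complex.conj_ofReal, map_one]
    ring
  have hlog2 : Complex.log (1 - (t : ℂ) * Complex.I) = ((L / 2 : ℝ) : ℂ) - (A : ℂ) * Complex.I := by
    rw [hconj, Complex.log_conj _ hargne, hlog1, map_add, map_mul, Complex.conj_I,
      Complex.conj_ofReal, Complex.conj_ofReal]
    ring
  have hne2 : (1 - (t : ℂ) * Complex.I) ≠ 0 := by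
    intro h
    have h' := congrArg Complex.re h
    simp at h'
  have hc1 : (1 + (t : ℂ) * Complex.I) ^ (-z)
      = Complex.exp (-(z * (L / 2)) + -(z * A) * Complex.I) := by
    rw [Complex.cpow_def_of_ne_zero hne1, hlog1]
    congr 1
    push_cast
    ring
  have hc2 : (1 - (t : ℂ) * Complex.I) ^ (-z)
      = Complex.exp (-(z * (L / 2)) + (z * A) * Complex.I) := by
    rw [Complex.cpow_def_of_ne_zero hne2, hlog2]
    congr 1
    push_cast
    ring
  have hden : ((1 + t ^ 2 : ℝ) : ℂ) ^ (z / 2) = Complex.exp ((L : ℂ) * (z / 2)) := by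
    rw [Complex.cpow_def_of_ne_zero (by exact_mod_cast h1t.ne'), hLdef]
    congr 2
    exact (Complex.ofReal_log h1t.le).symm
  rw [hVdef, hc1, hc2, hden, Complex.exp_add, Complex.exp_add]
  have h2c := Complex.two_cos (z * (A : ℂ))
  rw [div_eq_mul_inv, ← Complex.exp_neg,
    show -((L : ℂ) * (z / 2)) = -(z * ((L : ℂ) / 2)) by ring]
  rw [show (z * ((Real.arctan t : ℝ) : ℂ)) = z * (A : ℂ) by rw [hAdef]]
  linear_combination (Complex.exp (-(z * ((L : ℂ) / 2))) / 2) * h2c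
end

section
/- For every natural number m ≥ 1 and every real t, cos(m·arctan(t)) = Σ_{p=0}^{⌊m/2⌋} (−1)^p (m/(m−p)) C(m−p, p) 2^{m−2p−1} (1+t²)^{p − m/2}. -/
open Real Finset

noncomputable def Tm (m p : ℕ) (t : ℝ) : ℝ :=
  (-1 : ℝ) ^ p * ((m : ℝ) / ((m : ℝ) - p)) * ((m - p).choose p) *
    (2 : ℝ) ^ ((m : ℝ) - 2 * p - 1) * (1 + t ^ 2) ^ ((p : ℝ) - (m : ℝ) / 2)

lemma Tm_eq_zero {m p : ℕ} (h : m < 2 * p) (t : ℝ) : Tm m p t = 0 := by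
  have : (m - p).choose p = 0 := Nat.choose_eq_zero_of_lt (by omega)
  simp [Tm, this]

lemma Tm_sum_ext (m n : ℕ) (h : m / 2 + 1 ≤ n) (t : ℝ) :
    ∑ p ∈ range n, Tm m p t = ∑ p ∈ range (m / 2 + 1), Tm m p t := by
  refine (Finset.sum_subset (Finset.range_subset_range.mpr h) ?_).symm
  intro p hp hnp
  simp only [Finset.mem_range] at hp hnp
  exact Tm_eq_zero (by omega) t

lemma key (m q : ℕ) (hm : 1 ≤ m) (hq : q ≤ m / 2) (t : ℝ) :
    Tm (m+2) (q+1) t = 2 * (1 + t^2) ^ (-(1/2) : ℝ) * Tm (m+1) (q+1) t - Tm m q t := by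
  have hX : (0:ℝ) < 1 + t^2 := by positivity
  have h2q : 2 * q ≤ m := by omega
  have hqm : q < m := by omega
  have n1 : m + 2 - (q+1) = (m - q) + 1 := by omega
  have n2 : m + 1 - (q+1) = m - q := by omega
  have hC : (((m-q).choose (q+1) : ℝ)) * ((q:ℝ)+1) = ((m-q).choose q : ℝ) * ((m:ℝ) - 2*q) := by
    have h := Nat.choose_succ_right_eq (m-q) q
    have hsub : m - q - q = m - 2*q := by omega
    rw [hsub] at h
    have h2 := congrArg (Nat.cast : ℕ → ℝ) h
    push_cast [h2q] at h2
    linarith [h2]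
  have hmq : (0:ℝ) < (m:ℝ) - q := by
    have : (q:ℝ) < m := by exact_mod_cast hqm
    linarith
  have coeff : ((m:ℝ)+2) / (((m:ℝ)+1)-(q:ℝ)) * (((m-q).choose q : ℝ) + ((m-q).choose (q+1) : ℝ))
      = ((m:ℝ)+1)/((m:ℝ)-(q:ℝ)) * ((m-q).choose (q+1) : ℝ)
        + (m:ℝ)/((m:ℝ)-q) * ((m-q).choose q : ℝ) := by
    rw [div_mul_eq_mul_div, div_mul_eq_mul_div, div_mul_eq_mul_div, ← add_div,
      div_eq_div_iff (by linarith) (by linarith)]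
    linear_combination (-1:ℝ) * hC
  simp only [Tm, n1, n2, Nat.choose_succ_succ]
  rw [show (2:ℝ) ^ (((m + 2 : ℕ) : ℝ) - 2 * ((q + 1 : ℕ) : ℝ) - 1) = (2:ℝ) ^ ((m:ℝ) - 2*(q:ℝ) - 1) by
    congr 1; push_cast; ring]
  rw [show (2:ℝ) ^ (((m + 1 : ℕ) : ℝ) - 2 * ((q + 1 : ℕ) : ℝ) - 1)
      = (2:ℝ) ^ ((m:ℝ) - 2*(q:ℝ) - 1) * (2:ℝ)⁻¹ by
    rw [← Real.rpow_neg_one (2:ℝ), ← Real.rpow_add (by norm_num : (0:ℝ) < 2)]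
    congr 1; push_cast; ring]
  rw [show (1 + t^2 : ℝ) ^ (((q + 1 : ℕ) : ℝ) - ((m + 2 : ℕ) : ℝ) / 2)
      = (1 + t^2 : ℝ) ^ ((q:ℝ) - (m:ℝ)/2) by congr 1; push_cast; ring]
  rw [show (1 + t^2 : ℝ) ^ (((q + 1 : ℕ) : ℝ) - ((m + 1 : ℕ) : ℝ) / 2)
      = (1 + t^2 : ℝ) ^ ((q:ℝ) - (m:ℝ)/2) * (1 + t^2 : ℝ) ^ ((1/2 : ℝ)) by
    rw [← Real.rpow_add hX]; congr 1; push_cast; ring]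
  have hhalf : (1+t^2) ^ (-(1/2) : ℝ) * (1+t^2) ^ ((1/2) : ℝ) = 1 := by
    rw [← Real.rpow_add hX]; norm_num
  set Y := (1+t^2) ^ ((q:ℝ) - (m:ℝ)/2) with hY
  set Z := (2:ℝ) ^ ((m:ℝ) - 2*(q:ℝ) - 1) with hZ
  set u := (1+t^2) ^ (-(1/2) : ℝ) with hu
  set v := (1+t^2) ^ ((1/2) : ℝ) with hv
  push_cast
  linear_combination ((-1:ℝ)^(q+1) * Z * Y) * coeff
    + ((-1:ℝ)^q * (((m:ℝ)+1)/((m:ℝ)-(q:ℝ))) * ((m-q).choose (q+1) : ℝ) * Z * Y) * hhalf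

lemma key0 (m : ℕ) (t : ℝ) :
    Tm (m+2) 0 t = 2 * (1 + t^2) ^ (-(1/2) : ℝ) * Tm (m+1) 0 t := by
  have hX : (0:ℝ) < 1 + t^2 := by positivity
  simp only [Tm, Nat.sub_zero, Nat.choose_zero_right, pow_zero, Nat.cast_zero]
  rw [show ((m + 2 : ℕ) : ℝ) / (((m + 2 : ℕ) : ℝ) - 0) = 1 by
    rw [sub_zero]; exact div_self (by positivity)]
  rw [show ((m + 1 : ℕ) : ℝ) / (((m + 1 : ℕ) : ℝ) - 0) = 1 by
    rw [sub_zero]; exact div_self (by positivity)]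
  rw [show (2:ℝ) ^ (((m + 2 : ℕ) : ℝ) - 2 * (0:ℝ) - 1)
      = 2 * (2:ℝ) ^ (((m + 1 : ℕ) : ℝ) - 2 * (0:ℝ) - 1) by
    rw [← Real.rpow_one_add' (by norm_num)
      (by push_cast; intro h; have : (0:ℝ) ≤ (m:ℝ) := Nat.cast_nonneg m; linarith)]
    congr 1; push_cast; ring]
  rw [show (1 + t^2 : ℝ) ^ ((0:ℝ) - ((m + 2 : ℕ) : ℝ) / 2)
      = (1 + t^2 : ℝ) ^ (-(1/2) : ℝ) * (1 + t^2 : ℝ) ^ ((0:ℝ) - ((m + 1 : ℕ) : ℝ) / 2) by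
    rw [← Real.rpow_add hX]; congr 1; push_cast; ring]
  ring

lemma recur (m : ℕ) (hm : 1 ≤ m) (t : ℝ) :
    ∑ p ∈ range ((m+2)/2+1), Tm (m+2) p t
      = 2 * (1 + t^2) ^ (-(1/2) : ℝ) * ∑ p ∈ range ((m+1)/2+1), Tm (m+1) p t
        - ∑ p ∈ range (m/2+1), Tm m p t := by
  have h1 : (m+2)/2+1 = m/2+1+1 := by omega
  rw [h1, Finset.sum_range_succ']
  rw [Finset.sum_congr rfl
    (fun q hq => key m q hm (Nat.lt_succ_iff.mp (Finset.mem_range.mp hq)) t)]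
  rw [Finset.sum_sub_distrib, key0 m t, ← Finset.mul_sum]
  have e2 : (∑ q ∈ range (m/2+1), Tm (m+1) (q+1) t) + Tm (m+1) 0 t
      = ∑ p ∈ range ((m+1)/2+1), Tm (m+1) p t := by
    rw [← Finset.sum_range_succ' (fun k => Tm (m+1) k t) (m/2+1), Tm_sum_ext (m+1) (m/2+1+1) (by omega) t]
  linear_combination (2 * (1 + t^2) ^ (-(1/2) : ℝ)) * e2

lemma hcos_arctan (t : ℝ) : Real.cos (Real.arctan t) = (1 + t^2) ^ (-(1/2) : ℝ) := by
  have hX : (0:ℝ) < 1 + t^2 := by positivity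
  rw [Real.cos_arctan, Real.rpow_neg hX.le, Real.sqrt_eq_rpow, one_div]

lemma base1 (t : ℝ) : Real.cos ((1:ℕ) * Real.arctan t) = ∑ p ∈ range (1/2+1), Tm 1 p t := by
  have hX : (0:ℝ) < 1 + t^2 := by positivity
  rw [show (1:ℕ)/2+1 = 1 by norm_num, Finset.sum_range_one]
  simp only [Tm, Nat.cast_one, Nat.cast_zero, pow_zero, Nat.sub_zero, Nat.choose_zero_right]
  rw [show (1:ℝ) - 2*(0:ℝ) - 1 = 0 by ring, Real.rpow_zero,
    show (0:ℝ) - (1:ℝ)/2 = -(1/2) by ring]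
  rw [one_mul, hcos_arctan]
  norm_num

lemma base2 (t : ℝ) : Real.cos ((2:ℕ) * Real.arctan t) = ∑ p ∈ range (2/2+1), Tm 2 p t := by
  have hX : (0:ℝ) < 1 + t^2 := by positivity
  rw [show (2:ℕ)/2+1 = 2 by norm_num, Finset.sum_range_succ, Finset.sum_range_one]
  simp only [Tm]
  norm_num
  rw [Real.cos_two_mul, hcos_arctan]
  rw [← Real.rpow_natCast ((1+t^2) ^ (-(1/2):ℝ)) 2, ← Real.rpow_mul hX.le]
  norm_num
  ring

theorem cos_nat_mul_arctan_alt (m : ℕ) (hm : 1 ≤ m) (t : ℝ) :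
    Real.cos (m * Real.arctan t) =
      ∑ p ∈ Finset.range (m / 2 + 1),
        (-1 : ℝ) ^ p * ((m : ℝ) / ((m : ℝ) - p)) * ((m - p).choose p) *
          (2 : ℝ) ^ ((m : ℝ) - 2 * p - 1) * (1 + t ^ 2) ^ ((p : ℝ) - (m : ℝ) / 2) := by
  have main : ∀ n : ℕ,
      (Real.cos (((n+1:ℕ)) * Real.arctan t) = ∑ p ∈ range ((n+1)/2+1), Tm (n+1) p t) ∧
      (Real.cos (((n+2:ℕ)) * Real.arctan t) = ∑ p ∈ range ((n+2)/2+1), Tm (n+2) p t) := by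
    intro n
    induction n with
    | zero => exact ⟨base1 t, base2 t⟩
    | succ k ih =>
      refine ⟨ih.2, ?_⟩
      have hc : Real.cos (((k+1+2:ℕ):ℝ) * Real.arctan t)
          = 2 * Real.cos (Real.arctan t) * Real.cos (((k+2:ℕ):ℝ) * Real.arctan t)
            - Real.cos (((k+1:ℕ):ℝ) * Real.arctan t) := by
        have e1 : ((k+1+2:ℕ):ℝ) * Real.arctan t
            = ((k+2:ℕ):ℝ) * Real.arctan t + Real.arctan t := by push_cast; ring
        have e2 : ((k+1:ℕ):ℝ) * Real.arctan t
            = ((k+2:ℕ):ℝ) * Real.arctan t - Real.arctan t := by push_cast; ring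
        rw [e1, e2, Real.cos_add, Real.cos_sub]; ring
      rw [hc, hcos_arctan, ih.1, ih.2, recur (k+1) (by omega) t]
  obtain ⟨n, rfl⟩ : ∃ n, m = n + 1 := ⟨m - 1, by omega⟩
  exact (main n).1
end

section
/- For every natural number m ≥ 1 and every real t, sin(m·arctan(t)) = t · Σ_{p=0}^{⌊(m−1)/2⌋} (−1)^p C(m−p−1, p) 2^{m−2p−1} (1+t²)^{p − m/2}. -/
open Real Finset

/-- Explicit Chebyshev polynomial of the second kind. -/
noncomputable def Ufun (n : ℕ) (x : ℝ) : ℝ :=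
  ∑ p ∈ Finset.range (n / 2 + 1), (-1 : ℝ) ^ p * ((n - p).choose p) * (2 * x) ^ (n - 2 * p)

lemma Ufun_ext (n N : ℕ) (hN : n / 2 + 1 ≤ N) (x : ℝ) :
    Ufun n x = ∑ p ∈ Finset.range N, (-1 : ℝ) ^ p * ((n - p).choose p) * (2 * x) ^ (n - 2 * p) := by
  rw [Ufun, ← Finset.sum_range_add_sum_Ico _ hN]
  have h : ∀ p ∈ Finset.Ico (n / 2 + 1) N,
      (-1 : ℝ) ^ p * ((n - p).choose p) * (2 * x) ^ (n - 2 * p) = 0 := by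
    intro p hp
    rw [Finset.mem_Ico] at hp
    have : (n - p).choose p = 0 := Nat.choose_eq_zero_of_lt (by omega)
    simp [this]
  rw [Finset.sum_congr rfl h]
  simp

lemma Ufun_rec (n : ℕ) (x : ℝ) :
    Ufun (n + 2) x = 2 * x * Ufun (n + 1) x - Ufun n x := by
  have h2 : (n + 2) / 2 + 1 = n / 2 + 2 := by omega
  rw [Ufun_ext (n+1) (n/2+2) (by omega), Ufun, h2, Finset.sum_range_succ' _ (n/2+1),
    Finset.sum_range_succ' _ (n/2+1), mul_add, add_sub_right_comm]
  congr 1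
  · rw [Ufun, Finset.mul_sum, ← Finset.sum_sub_distrib]
    apply Finset.sum_congr rfl
    intro p hp
    rw [Finset.mem_range] at hp
    have hp' : p ≤ n / 2 := by omega
    have hc : (n + 2 - (p + 1)).choose (p + 1)
        = (n + 1 - (p + 1)).choose (p + 1) + (n + 1 - (p + 1)).choose p := by
      have : n + 2 - (p + 1) = (n + 1 - (p + 1)) + 1 := by omega
      rw [this, Nat.choose_succ_succ' (n + 1 - (p + 1)) p, Nat.add_comm]
    have he2 : n + 2 - 2 * (p + 1) = n - 2 * p := by omega
    rcases Nat.lt_or_ge (2 * p) n with h | h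
    · -- 2p < n : all exponents honest
      have he1 : n + 1 - 2 * (p + 1) = n - 2 * p - 1 := by omega
      have he3 : n - 2 * p = (n - 2 * p - 1) + 1 := by omega
      rw [hc, he1, he2, he3]
      push_cast
      ring
    · -- 2p ≥ n, and p ≤ n/2, so 2p = n (n even), the (n+1)-term has zero coefficient
      have hn : n = 2 * p := by omega
      have hz : (n + 1 - (p + 1)).choose (p + 1) = 0 :=
        Nat.choose_eq_zero_of_lt (by omega)
      have hz2 : (n + 1 - (p + 1)).choose p = 1 := by
        have : n + 1 - (p + 1) = p := by omega
        simp [this]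
      rw [hc, hz, hz2, he2, hn]
      have h4 : (2 * p - p).choose p = 1 := by
        have : 2 * p - p = p := by omega
        simp [this]
      have h5 : 2 * p - 2 * p = 0 := by omega
      rw [h4, h5]
      simp
      ring
  · -- p = 0 terms
    simp
    ring

lemma sin_succ_mul (n : ℕ) (θ : ℝ) :
    Real.sin ((n + 1) * θ) = Real.sin θ * Ufun n (Real.cos θ) := by
  induction n using Nat.twoStepInduction with
  | zero => simp [Ufun]
  | one =>
    have : ((1 : ℕ) + 1 : ℝ) * θ = θ + θ := by push_cast; ring
    rw [this, Real.sin_add, Ufun]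
    simp
    ring
  | more n ih1 ih2 =>
    push_cast at ih1 ih2 ⊢
    have e1 : ((n : ℝ) + 2 + 1) * θ = ((n : ℝ) + 1 + 1) * θ + θ := by ring
    have e2 : ((n : ℝ) + 1) * θ = ((n : ℝ) + 1 + 1) * θ - θ := by ring
    have key : Real.sin (((n : ℝ) + 2 + 1) * θ)
        = 2 * Real.cos θ * Real.sin (((n : ℝ) + 1 + 1) * θ)
          - Real.sin (((n : ℝ) + 1) * θ) := by
      rw [e1, e2, Real.sin_add, Real.sin_sub]
      ring
    rw [key, ih2, ih1, Ufun_rec]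
    ring

theorem sin_nat_mul_arctan_alt (m : ℕ) (hm : 1 ≤ m) (t : ℝ) :
    Real.sin (m * Real.arctan t) =
      t * ∑ p ∈ Finset.range ((m - 1) / 2 + 1),
        (-1 : ℝ) ^ p * ((m - p - 1).choose p) *
          (2 : ℝ) ^ ((m : ℝ) - 2 * p - 1) * (1 + t ^ 2) ^ ((p : ℝ) - (m : ℝ) / 2) := by
  obtain ⟨n, rfl⟩ : ∃ n, m = n + 1 := ⟨m - 1, by omega⟩
  have hc : ((n + 1 : ℕ) : ℝ) = (n : ℝ) + 1 := by push_cast; ring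
  rw [hc, sin_succ_mul n (Real.arctan t), Ufun, Finset.mul_sum, Finset.mul_sum]
  have hrange : (n + 1 - 1) / 2 + 1 = n / 2 + 1 := by omega
  rw [hrange]
  apply Finset.sum_congr rfl
  intro p hp
  rw [Finset.mem_range] at hp
  have hpn : 2 * p ≤ n := by omega
  set s : ℝ := Real.sqrt (1 + t ^ 2) with hsdef
  have hpos : (0 : ℝ) < 1 + t ^ 2 := by positivity
  have hs : 0 < s := Real.sqrt_pos.mpr hpos
  have hs2 : s ^ 2 = 1 + t ^ 2 := Real.sq_sqrt hpos.le
  have hsin : Real.sin (Real.arctan t) = t / s := Real.sin_arctan t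
  have hcos : Real.cos (Real.arctan t) = 1 / s := Real.cos_arctan t
  have hchoose : (n + 1 - p - 1).choose p = (n - p).choose p := by
    congr 1
    omega
  set k : ℕ := n - 2 * p with hkdef
  have hk : (k : ℝ) = (n : ℝ) - 2 * p := by
    have h : k + 2 * p = n := by omega
    have h' := congrArg (Nat.cast : ℕ → ℝ) h
    push_cast at h'
    linarith
  have he1 : ((n : ℝ) + 1) - 2 * p - 1 = (k : ℝ) := by linarith [hk]
  have he2 : (p : ℝ) - ((n : ℝ) + 1) / 2 = -(((k + 1 : ℕ) : ℝ)) / 2 := by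
    push_cast; linarith [hk]
  have hb : (2 : ℝ) ^ (((n : ℝ) + 1) - 2 * p - 1) = (2 : ℝ) ^ k := by
    rw [he1, Real.rpow_natCast]
  have hr : (1 + t ^ 2) ^ ((p : ℝ) - ((n : ℝ) + 1) / 2) = (s ^ (k + 1))⁻¹ := by
    rw [he2, ← hs2, ← Real.rpow_natCast s 2, ← Real.rpow_mul hs.le]
    have h5 : ((2 : ℕ) : ℝ) * (-(((k + 1 : ℕ) : ℝ)) / 2) = -(((k + 1 : ℕ) : ℝ)) := by
      push_cast; ring
    rw [h5, Real.rpow_neg hs.le, Real.rpow_natCast]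
  rw [hsin, hcos, hchoose, hb, hr]
  have hsne : s ≠ 0 := ne_of_gt hs
  rw [hkdef] at *
  field_simp
  ring_nf
  simp [hsne]
end

section
/- For natural numbers m ≥ 1 and j with 0 ≤ j ≤ ⌊(m−1)/2⌋, one has Σ_{k=j}^{⌊(m−1)/2⌋} C(m, 2k+1) C(k, j) = C(m−j−1, j) · 2^{m−2j−1}. -/
open Finset

private lemma sum_even_odd (f : ℕ → ℕ) (n : ℕ) :
    ∑ i ∈ range (2 * n), f i = ∑ k ∈ range n, (f (2 * k) + f (2 * k + 1)) := by
  induction n with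
  | zero => simp
  | succ n ih =>
      rw [show 2 * (n + 1) = 2 * n + 1 + 1 from by ring, Finset.sum_range_succ,
        Finset.sum_range_succ, ih, Finset.sum_range_succ, add_assoc]

private lemma sum_ext (n j N : ℕ) (h : n ≤ N) :
    ∑ k ∈ range N, n.choose (2 * k + 1) * k.choose j
      = ∑ k ∈ range n, n.choose (2 * k + 1) * k.choose j := by
  symm
  apply Finset.sum_subset (Finset.range_subset_range.2 h)
  intro k hk hk'
  simp only [Finset.mem_range, not_lt] at hk'
  have : n < 2 * k + 1 := by omega
  simp [Nat.choose_eq_zero_of_lt this]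

private lemma odd_sum (m : ℕ) :
    ∑ k ∈ range (m + 1), (m + 1).choose (2 * k + 1) = 2 ^ m := by
  have h1 : ∀ k, (m + 1).choose (2 * k + 1) = m.choose (2 * k) + m.choose (2 * k + 1) :=
    fun k => Nat.choose_succ_succ m (2 * k)
  calc ∑ k ∈ range (m + 1), (m + 1).choose (2 * k + 1)
      = ∑ k ∈ range (m + 1), (m.choose (2 * k) + m.choose (2 * k + 1)) := by simp_rw [h1]
    _ = ∑ i ∈ range (2 * (m + 1)), m.choose i := (sum_even_odd _ _).symm
    _ = ∑ i ∈ range (m + 1), m.choose i := by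
        symm
        apply Finset.sum_subset (Finset.range_subset_range.2 (by omega))
        intro i hi hi'
        simp only [Finset.mem_range, not_lt] at hi'
        exact Nat.choose_eq_zero_of_lt (by omega)
    _ = 2 ^ m := Nat.sum_range_choose m

private lemma recur_s6 (m j : ℕ) :
    ∑ k ∈ range (m + 2), (m + 2).choose (2 * k + 1) * k.choose (j + 1)
      = 2 * ∑ k ∈ range (m + 1), (m + 1).choose (2 * k + 1) * k.choose (j + 1)
        + ∑ k ∈ range m, m.choose (2 * k + 1) * k.choose j := by
  set B := ∑ k ∈ range (m + 2), m.choose (2 * k) * k.choose (j + 1) with hB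
  set S0 := ∑ k ∈ range m, m.choose (2 * k + 1) * k.choose j with hS0
  set S1 := ∑ k ∈ range m, m.choose (2 * k + 1) * k.choose (j + 1) with hS1
  -- the (m+1) sum equals B + S1
  have hSm1 : ∑ k ∈ range (m + 1), (m + 1).choose (2 * k + 1) * k.choose (j + 1) = B + S1 := by
    rw [← sum_ext (m + 1) (j + 1) (m + 2) (by omega)]
    have : ∀ k, (m + 1).choose (2 * k + 1) * k.choose (j + 1)
        = m.choose (2 * k) * k.choose (j + 1) + m.choose (2 * k + 1) * k.choose (j + 1) := by
      intro k
      rw [Nat.choose_succ_succ m (2 * k), add_mul]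
    rw [Finset.sum_congr rfl (fun k _ => this k), Finset.sum_add_distrib, hB,
      sum_ext m (j + 1) (m + 2) (by omega), hS1]
  -- B with the first term peeled off
  have hBshift : B = ∑ k ∈ range (m + 1), m.choose (2 * k + 2) * (k + 1).choose (j + 1) := by
    rw [hB, Finset.sum_range_succ']
    simp [Nat.choose_zero_succ]
    apply Finset.sum_congr rfl
    intro k _
    rw [show 2 * (k + 1) = 2 * k + 2 from by ring]
  -- main computation
  have step1 : ∑ k ∈ range (m + 2), (m + 2).choose (2 * k + 1) * k.choose (j + 1)
      = (∑ k ∈ range (m + 2), (m + 1).choose (2 * k) * k.choose (j + 1))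
        + (B + S1) := by
    have : ∀ k, (m + 2).choose (2 * k + 1) * k.choose (j + 1)
        = (m + 1).choose (2 * k) * k.choose (j + 1)
          + (m + 1).choose (2 * k + 1) * k.choose (j + 1) := by
      intro k
      rw [Nat.choose_succ_succ (m + 1) (2 * k), add_mul]
    rw [Finset.sum_congr rfl (fun k _ => this k), Finset.sum_add_distrib,
      sum_ext (m + 1) (j + 1) (m + 2) (by omega), hSm1]
  have step2 : ∑ k ∈ range (m + 2), (m + 1).choose (2 * k) * k.choose (j + 1)
      = (S0 + S1) + B := by
    rw [Finset.sum_range_succ']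
    simp only [Nat.choose_zero_succ, mul_zero, add_zero]
    have : ∀ k, (m + 1).choose (2 * (k + 1)) * (k + 1).choose (j + 1)
        = (m.choose (2 * k + 1) * k.choose j + m.choose (2 * k + 1) * k.choose (j + 1))
          + m.choose (2 * k + 2) * (k + 1).choose (j + 1) := by
      intro k
      rw [show 2 * (k + 1) = 2 * k + 1 + 1 from by ring, Nat.choose_succ_succ m (2 * k + 1),
        add_mul, Nat.choose_succ_succ k j, mul_add]
    rw [Finset.sum_congr rfl (fun k _ => this k), Finset.sum_add_distrib,
      Finset.sum_add_distrib, ← hBshift,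
      sum_ext m j (m + 1) (by omega), sum_ext m (j + 1) (m + 1) (by omega), hS0, hS1]
  rw [step1, step2, hSm1]
  ring

private lemma main_aux : ∀ m, 1 ≤ m → ∀ j,
    ∑ k ∈ range m, m.choose (2 * k + 1) * k.choose j
      = (m - j - 1).choose j * 2 ^ (m - 2 * j - 1) := by
  intro m
  induction m using Nat.strong_induction_on with
  | _ m ih =>
    intro hm j
    match m, hm with
    | 1, _ =>
        cases j with
        | zero => simp
        | succ j => simp [Nat.choose_zero_succ]
    | 2, _ =>
        match j with
        | 0 => simp [Finset.sum_range_succ]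
        | 1 => simp [Finset.sum_range_succ]
        | (j + 2) => simp [Finset.sum_range_succ, Nat.choose_zero_succ,
            Nat.choose_eq_zero_of_lt]
    | (n + 3), _ =>
        cases j with
        | zero =>
            simp only [Nat.choose_zero_right, mul_one, Nat.mul_zero, Nat.sub_zero,
              Nat.choose_zero_right, one_mul]
            have h := odd_sum (n + 2)
            rw [show n + 2 + 1 = n + 3 from rfl] at h
            rw [show n + 3 - 1 = n + 2 from rfl]
            exact h
        | succ j =>
            have h := recur_s6 (n + 1) j
            have e1 : n + 1 + 2 = n + 3 := by omega
            rw [e1] at h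
            rw [h, ih (n + 2) (by omega) (by omega) (j + 1), ih (n + 1) (by omega) (by omega) j]
            -- now pure arithmetic about choose and powers
            have e2 : n + 2 - (j + 1) - 1 = n - j := by omega
            have e3 : n + 1 - j - 1 = n - j := by omega
            have e4 : n + 3 - (j + 1) - 1 = n + 1 - j := by omega
            rw [e2, e3, e4]
            rcases Nat.lt_or_ge n (2 * j) with hc | hc
            · -- n < 2j : everything vanishes
              have hj1 : 1 ≤ j := by omega
              have z1 : (n - j).choose (j + 1) = 0 := Nat.choose_eq_zero_of_lt (by omega)
              have z2 : (n - j).choose j = 0 := Nat.choose_eq_zero_of_lt (by omega)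
              have z3 : (n + 1 - j).choose (j + 1) = 0 := Nat.choose_eq_zero_of_lt (by omega)
              rw [z1, z2, z3]
              ring
            · rcases Nat.eq_or_lt_of_le hc with hc2 | hc2
              · -- n = 2j
                have e5 : n - j = j := by omega
                have e6 : n + 1 - j = j + 1 := by omega
                have e7 : n + 2 - 2 * (j + 1) - 1 = 0 := by omega
                have e8 : n + 1 - 2 * j - 1 = 0 := by omega
                have e9 : n + 3 - 2 * (j + 1) - 1 = 0 := by omega
                rw [e5, e6, e7, e8, e9, Nat.choose_self, Nat.choose_self,
                  Nat.choose_succ_self]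
                ring
              · -- n ≥ 2j + 1
                have e5 : n + 1 - j = (n - j) + 1 := by omega
                have e6 : n + 3 - 2 * (j + 1) - 1 = (n + 2 - 2 * (j + 1) - 1) + 1 := by omega
                have e7 : n + 1 - 2 * j - 1 = (n + 2 - 2 * (j + 1) - 1) + 1 := by omega
                rw [e5, e6, e7, Nat.choose_succ_succ (n - j) j]
                ring

theorem choose_sum_identity (m j : ℕ) (hm : 1 ≤ m) (hj : j ≤ (m - 1) / 2) :
    ∑ k ∈ Finset.Icc j ((m - 1) / 2), m.choose (2 * k + 1) * k.choose j =
      (m - j - 1).choose j * 2 ^ (m - 2 * j - 1) := by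
  rw [← main_aux m hm j]
  apply Finset.sum_subset
  · intro k hk
    simp only [Finset.mem_Icc] at hk
    simp only [Finset.mem_range]
    omega
  · intro k hk hk'
    simp only [Finset.mem_range] at hk
    simp only [Finset.mem_Icc, not_and_or, not_le] at hk'
    rcases hk' with h | h
    · rw [Nat.choose_eq_zero_of_lt h, mul_zero]
    · rw [Nat.choose_eq_zero_of_lt (show m < 2 * k + 1 by omega), zero_mul]
end

section
/- For natural numbers k ≥ 1 and p with 1 ≤ p ≤ k, Σ_{j=1}^{k} (−1)^j j C(2k−j−1, k−j) C(p, j−p) equals (−1)^k k if p = k, and equals 0 if p < k. -/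
open Finset

lemma key_s7 (q : ℕ) : ∀ r N : ℕ, q + r ≤ N →
    ∑ i ∈ Finset.range (r + 1), (-1 : ℤ) ^ i * q.choose i * ((N - i).choose (r - i))
      = ((N - q).choose r : ℤ) := by
  induction q with
  | zero =>
      intro r N _
      rw [Finset.sum_eq_single 0]
      · simp
      · rintro (_ | i) _ hi
        · exact absurd rfl hi
        · simp
      · simp
  | succ q ih =>
      intro r N h
      match r with
      | 0 => simp
      | r + 1 =>
        have hN1 : q + r ≤ N - 1 := by omega
        have hN2 : q + (r + 1) ≤ N := by omega
        have H1 := ih r (N - 1) hN1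
        have H2 := ih (r + 1) N hN2
        rw [Finset.sum_range_succ'] at H2 ⊢
        have e1 : ∀ i ∈ Finset.range (r + 1),
            (-1 : ℤ) ^ (i + 1) * (q + 1).choose (i + 1) * ((N - (i + 1)).choose (r + 1 - (i + 1)))
            = -((-1 : ℤ) ^ i * q.choose i * ((N - 1 - i).choose (r - i)))
              + (-1 : ℤ) ^ (i + 1) * q.choose (i + 1) * ((N - (i + 1)).choose (r + 1 - (i + 1))) := by
          intro i _
          have hidx : N - (i + 1) = N - 1 - i := by omega
          have hidx2 : r + 1 - (i + 1) = r - i := by omega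
          rw [Nat.choose_succ_succ, hidx, hidx2]
          push_cast
          ring
        rw [Finset.sum_congr rfl e1, Finset.sum_add_distrib, Finset.sum_neg_distrib, H1]
        have hP : ((N - q).choose (r + 1) : ℤ) = (N - 1 - q).choose r + (N - 1 - q).choose (r + 1) := by
          have hNq : N - q = (N - 1 - q) + 1 := by omega
          rw [hNq, Nat.choose_succ_succ]
          push_cast; ring
        have hgoal : ((N - (q + 1)).choose (r + 1) : ℤ) = (N - 1 - q).choose (r + 1) := by
          congr 2; omega
        rw [hgoal]
        simp only [pow_zero, Nat.choose_zero_right, Nat.cast_one, one_mul, Nat.sub_zero] at H2 ⊢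
        linarith [H2, hP]

theorem choose_orthogonality (k p : ℕ) (hk : 1 ≤ k) (hp1 : 1 ≤ p) (hpk : p ≤ k) :
    (∑ j ∈ Finset.Icc 1 k, (-1 : ℤ) ^ j * j * ((2 * k - j - 1).choose (k - j)) *
        (if j < p then 0 else (p.choose (j - p) : ℤ))) =
      if p = k then (-1 : ℤ) ^ k * k else 0 := by
  set m := k - p with hm
  have hkm : k = p + m := by omega
  have hsub : Finset.Icc p k ⊆ Finset.Icc 1 k := Finset.Icc_subset_Icc_left hp1
  rw [← Finset.sum_subset hsub (by
    intro j hj hj2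
    simp only [Finset.mem_Icc] at hj hj2
    have : j < p := by omega
    simp [this])]
  have e0 : ∀ j ∈ Finset.Icc p k,
      (-1 : ℤ) ^ j * j * ((2 * k - j - 1).choose (k - j)) *
        (if j < p then 0 else (p.choose (j - p) : ℤ))
      = (-1 : ℤ) ^ j * j * ((2 * k - j - 1).choose (k - j)) * (p.choose (j - p) : ℤ) := by
    intro j hj
    simp only [Finset.mem_Icc] at hj
    rw [if_neg (by omega)]
  rw [Finset.sum_congr rfl e0, ← Finset.Ico_add_one_right_eq_Icc, Finset.sum_Ico_eq_sum_range]
  have hrange : k + 1 - p = m + 1 := by omega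
  rw [hrange]
  set N := p + 2 * m - 1 with hN
  have e1 : ∀ i ∈ Finset.range (m + 1),
      (-1 : ℤ) ^ (p + i) * ((p + i : ℕ) : ℤ) * ((2 * k - (p + i) - 1).choose (k - (p + i))) *
        (p.choose (p + i - p) : ℤ)
      = (-1 : ℤ) ^ p * ((p : ℤ) * ((-1 : ℤ) ^ i * p.choose i * ((N - i).choose (m - i)))
          + (-1 : ℤ) ^ i * i * p.choose i * ((N - i).choose (m - i))) := by
    intro i hi
    simp only [Finset.mem_range] at hi
    have h1 : 2 * k - (p + i) - 1 = N - i := by omega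
    have h2 : k - (p + i) = m - i := by omega
    have h3 : p + i - p = i := by omega
    rw [h1, h2, h3, pow_add]
    push_cast
    ring
  rw [Finset.sum_congr rfl e1, ← Finset.mul_sum, Finset.sum_add_distrib, ← Finset.mul_sum]
  rcases Nat.eq_or_lt_of_le hpk with hpk' | hpk'
  · -- p = k, m = 0
    have hm0 : m = 0 := by omega
    rw [if_pos hpk']
    simp [hm0, hpk']
  · -- p < k, m ≥ 1
    have hm1 : 1 ≤ m := by omega
    rw [if_neg (by omega)]
    have hS1 : ∑ i ∈ Finset.range (m + 1), (-1 : ℤ) ^ i * p.choose i * ((N - i).choose (m - i))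
        = ((2 * m - 1).choose m : ℤ) := by
      have := key_s7 p m N (by omega)
      rw [this]
      congr 2
      omega
    have hT : ∑ i ∈ Finset.range (m + 1), (-1 : ℤ) ^ i * i * p.choose i * ((N - i).choose (m - i))
        = -(p : ℤ) * ((2 * m - 1).choose (m - 1) : ℤ) := by
      rw [Finset.sum_range_succ']
      have e2 : ∀ t ∈ Finset.range m,
          (-1 : ℤ) ^ (t + 1) * ((t + 1 : ℕ) : ℤ) * p.choose (t + 1) * ((N - (t + 1)).choose (m - (t + 1)))
          = -(p : ℤ) * ((-1 : ℤ) ^ t * (p - 1).choose t * ((N - 1 - t).choose (m - 1 - t))) := by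
        intro t ht
        have hmul : (p - 1 + 1) * (p - 1).choose t = (p - 1 + 1).choose (t + 1) * (t + 1) :=
          Nat.add_one_mul_choose_eq (p - 1) t
        have hp' : p - 1 + 1 = p := by omega
        rw [hp'] at hmul
        have h1 : N - (t + 1) = N - 1 - t := by omega
        have h2 : m - (t + 1) = m - 1 - t := by omega
        rw [h1, h2]
        have : ((p : ℤ)) * ((p - 1).choose t : ℤ) = (p.choose (t + 1) : ℤ) * (t + 1) := by
          exact_mod_cast congrArg (Nat.cast : ℕ → ℤ) hmul
        push_cast
        linear_combination ((-1 : ℤ) ^ t * ((N - 1 - t).choose (m - 1 - t) : ℤ)) * this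
      rw [Finset.sum_congr rfl e2, ← Finset.mul_sum]
      have hkey := key_s7 (p - 1) (m - 1) (N - 1) (by omega)
      have hr : m - 1 + 1 = m := by omega
      rw [hr] at hkey
      rw [hkey]
      have hc : N - 1 - (p - 1) = 2 * m - 1 := by omega
      rw [hc]
      simp
    rw [hS1, hT]
    have hsymm : (2 * m - 1).choose (m - 1) = (2 * m - 1).choose m := by
      have h := Nat.choose_symm (show m ≤ 2 * m - 1 by omega)
      rwa [show 2 * m - 1 - m = m - 1 from by omega] at h
    rw [hsymm]
    ring
end

section
/- For every natural number k ≥ 1, Σ_{j=1}^{k} 2^j C(2k−j−1, k−j) = 2^{2k−1}. -/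
open Finset

lemma aux (n : ℕ) : ∑ i ∈ range (n+1), 2^(n-i) * (n+i).choose i = 4^n := by
  induction n with
  | zero => simp
  | succ n ih =>
    -- S := shifted tail of IH sum
    set S := ∑ i ∈ range n, 2^(n-(i+1)) * (n+(i+1)).choose (i+1) with hS
    have hIH : 2^n + S = 4^n := by
      rw [← ih, Finset.sum_range_succ']
      simp [add_comm]
      exact hS
    set T := ∑ i ∈ range (n+2), 2^(n+1-i) * (n+1+i).choose i with hT
    set B := ∑ i ∈ range (n+1), 2^(n-i) * (n+1+i).choose i with hB
    -- Eq1: T = 2*B + (2*n+2).choose (n+1)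
    have eq1 : T = 2*B + (2*n+2).choose (n+1) := by
      rw [hT, Finset.sum_range_succ]
      have : ∑ i ∈ range (n+1), 2^(n+1-i) * (n+1+i).choose i = 2*B := by
        rw [hB, Finset.mul_sum]
        refine Finset.sum_congr rfl fun i hi => ?_
        have hi' : i ≤ n := Nat.lt_succ_iff.mp (Finset.mem_range.mp hi)
        rw [show n+1-i = (n-i)+1 by omega, pow_succ]
        ring
      rw [this]
      rw [show n+1+(n+1) = 2*n+2 by omega]
      simp
    -- Eq2: T = 2^(n+1) + B + (2*S + (2*n+1).choose (n+1))
    have eq2 : T = 2^(n+1) + B + (2*S + (2*n+1).choose (n+1)) := by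
      rw [hT, Finset.sum_range_succ']
      have h0 : 2^(n+1-0) * (n+1+0).choose 0 = 2^(n+1) := by simp
      rw [h0]
      have hterm : ∀ i ∈ range (n+1), 2^(n+1-(i+1)) * (n+1+(i+1)).choose (i+1)
          = 2^(n-i) * (n+1+i).choose i + 2^(n-i) * (n+1+i).choose (i+1) := by
        intro i hi
        rw [show n+1-(i+1) = n-i by omega,
            show n+1+(i+1) = (n+1+i)+1 by omega, Nat.choose_succ_succ]
        ring
      rw [Finset.sum_congr rfl hterm, Finset.sum_add_distrib]
      have hA : ∑ i ∈ range (n+1), 2^(n-i) * (n+1+i).choose (i+1)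
          = 2*S + (2*n+1).choose (n+1) := by
        rw [Finset.sum_range_succ, hS, Finset.mul_sum]
        congr 1
        · refine Finset.sum_congr rfl fun i hi => ?_
          have hi' : i < n := Finset.mem_range.mp hi
          rw [show n-i = (n-(i+1))+1 by omega, pow_succ, show n+(i+1) = n+1+i by omega]
          ring
        · rw [show n-n = 0 by omega, show n+1+n = 2*n+1 by omega]
          simp
      rw [hA, hB]
      ring
    have hsym : (2*n+2).choose (n+1) = 2 * ((2*n+1).choose (n+1)) := by
      rw [show 2*n+2 = (2*n+1)+1 by omega, Nat.choose_succ_succ, Nat.choose_symm_half]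
      omega
    have h4 : (4:ℕ)^(n+1) = 4 * 4^n := by ring
    have h2 : (2:ℕ)^(n+1) = 2 * 2^n := by ring
    omega

theorem choose_sum_pow (k : ℕ) (hk : 1 ≤ k) :
    ∑ j ∈ Finset.Icc 1 k, 2 ^ j * (2 * k - j - 1).choose (k - j) = 2 ^ (2 * k - 1) := by
  obtain ⟨m, rfl⟩ : ∃ m, k = m + 1 := ⟨k - 1, by omega⟩
  have hIcc : ∑ j ∈ Finset.Icc 1 (m+1), 2 ^ j * (2*(m+1) - j - 1).choose (m+1 - j)
      = ∑ i ∈ range (m+1), 2^(1+i) * (2*m - i).choose (m - i) := by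
    rw [← Finset.Ico_add_one_right_eq_Icc, Finset.sum_Ico_eq_sum_range]
    refine Finset.sum_congr (by congr 1) fun i hi => ?_
    rw [show 2*(m+1)-(1+i)-1 = 2*m-i by omega, show m+1-(1+i) = m-i by omega]
  rw [hIcc, ← Finset.sum_range_reflect]
  have : ∑ i ∈ range (m+1), 2^(1+(m+1-1-i)) * (2*m - (m+1-1-i)).choose (m - (m+1-1-i))
      = ∑ i ∈ range (m+1), 2 * (2^(m-i) * (m+i).choose i) := by
    refine Finset.sum_congr rfl fun i hi => ?_
    have hi' : i ≤ m := Nat.lt_succ_iff.mp (Finset.mem_range.mp hi)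
    rw [show m+1-1-i = m-i by omega, show 2*m - (m-i) = m+i by omega,
        show m - (m-i) = i by omega, show 1+(m-i) = (m-i)+1 by omega, pow_succ]
    ring
  rw [this, ← Finset.mul_sum, aux]
  rw [show 2*(m+1)-1 = 2*m+1 by omega]
  rw [show (4:ℕ) = 2^2 by norm_num, ← pow_mul]
  ring
end

section
/- For every natural number k ≥ 1, Σ_{j=1}^{k} j · 2^j C(2k−j−1, k−j) = k · C(2k, k). -/
open Finset

lemma choose_aux (k : ℕ) : ∀ m, m ≤ k →
    (∑ j ∈ Finset.Icc 1 m, j * 2 ^ j * (2 * k - j - 1).choose (k - j)) +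
      2 * (k - m) * 2 ^ m * (2 * k - m - 1).choose (k - m) = k * (2 * k).choose k := by
  intro m
  induction m with
  | zero =>
    intro _
    simp only [Finset.Icc_eq_empty_of_lt (by norm_num : (1:ℕ) > 0), Finset.sum_empty,
      Nat.sub_zero, pow_zero, mul_one, zero_add]
    rcases Nat.eq_zero_or_pos k with hk | hk
    · simp [hk]
    · obtain ⟨n, rfl⟩ : ∃ n, k = n + 1 := ⟨k - 1, by omega⟩
      have h1 : 2 * (n + 1) - 1 = 2 * n + 1 := by omega
      have h2 : 2 * (n + 1) = 2 * n + 1 + 1 := by omega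
      have h3 : (2 * n + 1).choose (n + 1) = (2 * n + 1).choose n := by
        have h := Nat.choose_symm (show n + 1 ≤ 2 * n + 1 by omega)
        simpa [show 2 * n + 1 - (n + 1) = n by omega] using h.symm
      have hp : (2 * n + 1 + 1).choose (n + 1) =
          (2 * n + 1).choose n + (2 * n + 1).choose (n + 1) :=
        Nat.choose_succ_succ' (2 * n + 1) n
      rw [h1, h2, hp, h3]
      ring
  | succ m ih =>
    intro hm
    obtain ⟨d, rfl⟩ : ∃ d, k = m + 1 + d := ⟨k - (m + 1), by omega⟩
    have hIH := ih (by omega)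
    rw [Finset.sum_Icc_succ_top (by omega : 1 ≤ m + 1)]
    have h1 : m + 1 + d - m = d + 1 := by omega
    have h2 : 2 * (m + 1 + d) - m - 1 = m + 2 * d + 1 := by omega
    have h3 : 2 * (m + 1 + d) - (m + 1) - 1 = m + 2 * d := by omega
    have h4 : m + 1 + d - (m + 1) = d := by omega
    rw [h1, h2] at hIH
    rw [h3, h4]
    have key := Nat.add_one_mul_choose_eq (m + 2 * d) d
    have goal2 : (m + 1) * 2 ^ (m + 1) * (m + 2 * d).choose d +
        2 * d * 2 ^ (m + 1) * (m + 2 * d).choose d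
        = 2 * (d + 1) * 2 ^ m * (m + 2 * d + 1).choose (d + 1) := by
      have e : 2 * (d + 1) * 2 ^ m * ((m + 2 * d + 1).choose (d + 1))
          = 2 ^ m * ((m + 2 * d + 1).choose (d + 1) * (d + 1)) * 2 := by ring
      rw [e, ← key, pow_succ]
      ring
    omega

theorem choose_sum_pow_weighted (k : ℕ) (hk : 1 ≤ k) :
    ∑ j ∈ Finset.Icc 1 k, j * 2 ^ j * (2 * k - j - 1).choose (k - j) =
      k * (2 * k).choose k := by
  have h := choose_aux k k le_rfl
  simpa using h
end

section
/- For every real q > 0 and every natural number k ≥ 0, ∫_0^∞ t^{2k+1}/(e^{2πqt} − 1) dt = (−1)^k B_{2k+2} / (4(k+1) q^{2k+2}). -/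
open Real MeasureTheory

lemma aux_integrable {b : ℝ} (hb : 0 < b) (p : ℕ) :
    IntegrableOn (fun t : ℝ ↦ t ^ p * Real.exp (-(b * t))) (Set.Ioi 0) := by
  have h := integrableOn_rpow_mul_exp_neg_mul_rpow (p := 1) (s := (p : ℝ))
    (lt_of_lt_of_le neg_one_lt_zero (Nat.cast_nonneg p)) one_pos hb
  refine h.congr_fun (fun x hx => ?_) measurableSet_Ioi
  dsimp only
  rw [Real.rpow_one, Real.rpow_natCast, neg_mul]

lemma aux_integral {b : ℝ} (hb : 0 < b) (p : ℕ) :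
    ∫ t in Set.Ioi (0:ℝ), t ^ p * Real.exp (-(b * t)) =
      (Nat.factorial p : ℝ) / b ^ (p + 1) := by
  have h := Real.integral_rpow_mul_exp_neg_mul_Ioi (a := (p : ℝ) + 1)
    (by positivity) hb
  rw [show ((p : ℝ) + 1 - 1) = (p : ℝ) by ring] at h
  rw [show ∫ t in Set.Ioi (0:ℝ), t ^ p * Real.exp (-(b * t)) =
      ∫ t in Set.Ioi (0:ℝ), t ^ (p : ℝ) * Real.exp (-(b * t)) from
    setIntegral_congr_fun measurableSet_Ioi fun t ht => by
      rw [Real.rpow_natCast], h, Real.Gamma_nat_eq_factorial,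
    show ((p : ℝ) + 1) = ((p + 1 : ℕ) : ℝ) by push_cast; ring,
    Real.rpow_natCast, one_div, inv_pow, div_eq_inv_mul]

theorem integral_pow_div_exp_sub_one (q : ℝ) (hq : 0 < q) (k : ℕ) :
    ∫ t in Set.Ioi (0 : ℝ), t ^ (2 * k + 1) / (Real.exp (2 * π * q * t) - 1) =
      (-1 : ℝ) ^ k * ((bernoulli (2 * k + 2) : ℚ) : ℝ) / (4 * (k + 1) * q ^ (2 * k + 2)) := by
  have hπ := Real.pi_pos
  set a : ℝ := 2 * π * q with ha_def
  have ha : 0 < a := by positivity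
  set p : ℕ := 2 * k + 1 with hp_def
  clear_value a p
  -- pointwise sum
  have hF : ∀ t ∈ Set.Ioi (0:ℝ), HasSum (fun n : ℕ ↦ t ^ p * Real.exp (-(((n:ℝ)+1) * a * t)))
      (t ^ p / (Real.exp (a * t) - 1)) := by
    intro t ht
    rw [Set.mem_Ioi] at ht
    set r : ℝ := Real.exp (-(a * t)) with hr_def
    have hr0 : 0 < r := Real.exp_pos _
    have hr1 : r < 1 := Real.exp_lt_one_iff.mpr (by nlinarith)
    have he : 1 < Real.exp (a * t) := by
      rw [← Real.exp_zero]; exact Real.exp_lt_exp.mpr (by nlinarith)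
    have hg := (hasSum_geometric_of_lt_one hr0.le hr1).mul_left (t ^ p * r)
    have hterm : ∀ n : ℕ, t ^ p * r * r ^ n = t ^ p * Real.exp (-(((n:ℝ)+1) * a * t)) := by
      intro n
      rw [mul_assoc, ← pow_succ', hr_def, ← Real.exp_nat_mul]
      push_cast
      ring_nf
    have hval : t ^ p * r * (1 - r)⁻¹ = t ^ p / (Real.exp (a * t) - 1) := by
      have h1 : (1 - r) = r * (Real.exp (a * t) - 1) := by
        rw [mul_sub, ← Real.exp_add, mul_one]
        simp
      rw [h1, mul_inv, ← mul_assoc, mul_assoc (t ^ p), mul_inv_cancel₀ hr0.ne', mul_one,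
        div_eq_mul_inv]
    rw [← hval]
    exact hg.congr_fun fun n => (hterm n).symm
  -- per-term integrability and values
  have hb : ∀ n : ℕ, (0:ℝ) < ((n:ℝ)+1) * a := fun n => by positivity
  have hint : ∀ n : ℕ, ∫ t in Set.Ioi (0:ℝ), t ^ p * Real.exp (-(((n:ℝ)+1) * a * t)) =
      (Nat.factorial p : ℝ) / (((n:ℝ)+1) * a) ^ (p + 1) := fun n => aux_integral (hb n) p
  have hIint : ∀ n : ℕ, IntegrableOn
      (fun t : ℝ ↦ t ^ p * Real.exp (-(((n:ℝ)+1) * a * t))) (Set.Ioi 0) := fun n => by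
    have := aux_integrable (hb n) p
    simpa [mul_assoc] using this
  -- zeta value
  have hz := hasSum_zeta_nat (k := k + 1) (Nat.succ_ne_zero k)
  rw [Nat.mul_succ] at hz
  set Z : ℝ := (-1 : ℝ) ^ (k + 1 + 1) * (2:ℝ) ^ (2*k + 2 - 1) * π ^ (2*k+2) *
      (bernoulli (2*k+2) : ℚ) / (Nat.factorial (2*k+2)) with hZ_def
  have hz' : HasSum (fun n : ℕ ↦ 1 / ((n:ℝ)+1) ^ (p + 1)) Z := by
    have h0 := (hasSum_nat_add_iff' (f := fun n : ℕ ↦ 1 / (n:ℝ) ^ (2*k+2)) 1).mpr hz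
    simp only [Finset.range_one, Finset.sum_singleton, Nat.cast_zero] at h0
    rw [show (1:ℝ) / (0:ℝ) ^ (2*k+2) = 0 by simp, sub_zero] at h0
    refine h0.congr_fun fun n => ?_
    rw [hp_def]
    push_cast
    ring_nf
  -- summability of integrals of norms
  have hnorm : Summable fun n : ℕ ↦ ∫ t in Set.Ioi (0:ℝ),
      ‖t ^ p * Real.exp (-(((n:ℝ)+1) * a * t))‖ := by
    have heq : ∀ n : ℕ, (∫ t in Set.Ioi (0:ℝ), ‖t ^ p * Real.exp (-(((n:ℝ)+1) * a * t))‖)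
        = (Nat.factorial p : ℝ) / (((n:ℝ)+1) * a) ^ (p + 1) := by
      intro n
      rw [← hint n]
      refine setIntegral_congr_fun measurableSet_Ioi fun t ht => ?_
      have ht' : (0:ℝ) < t := ht
      rw [Real.norm_of_nonneg (by positivity)]
    simp_rw [heq]
    refine ((hz'.mul_left ((Nat.factorial p : ℝ) / a ^ (p + 1))).summable).congr fun n => ?_
    rw [mul_pow, div_mul_div_comm, mul_one, mul_comm (a ^ (p+1))]
  have hS := MeasureTheory.hasSum_integral_of_summable_integral_norm
    (μ := (volume : Measure ℝ).restrict (Set.Ioi 0))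
    (F := fun (n : ℕ) (t : ℝ) ↦ t ^ p * Real.exp (-(((n:ℝ)+1) * a * t))) hIint hnorm
  have hS2 : HasSum (fun n : ℕ ↦ ∫ t in Set.Ioi (0:ℝ), t ^ p * Real.exp (-(((n:ℝ)+1) * a * t)))
      ((Nat.factorial p : ℝ) / a ^ (p + 1) * Z) := by
    refine (hz'.mul_left ((Nat.factorial p : ℝ) / a ^ (p + 1))).congr_fun fun n => ?_
    rw [hint n, mul_pow, div_mul_div_comm, mul_one, mul_comm (a ^ (p+1))]
  have hmain : ∫ t in Set.Ioi (0:ℝ), t ^ p / (Real.exp (a * t) - 1)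
      = (Nat.factorial p : ℝ) / a ^ (p + 1) * Z := by
    rw [setIntegral_congr_fun measurableSet_Ioi
      (fun t ht => ((hF t ht).tsum_eq).symm : ∀ t ∈ Set.Ioi (0:ℝ),
        t ^ p / (Real.exp (a * t) - 1) = ∑' n : ℕ, t ^ p * Real.exp (-(((n:ℝ)+1) * a * t)))]
    exact hS.unique hS2
  rw [hmain, hZ_def, hp_def, ha_def]
  have h1 : (2*k+2-1) = 2*k+1 := by omega
  have h2 : Nat.factorial (2*k+2) = (2*k+2) * Nat.factorial (2*k+1) := by
    rw [show 2*k+2 = (2*k+1)+1 by omega, Nat.factorial_succ]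
  rw [h1, h2]
  have hf : (0:ℝ) < (Nat.factorial (2*k+1) : ℝ) := by positivity
  have hπ' : π ≠ 0 := hπ.ne'
  have hq' : q ≠ 0 := hq.ne'
  have hk1 : ((k:ℝ)+1) ≠ 0 := by positivity
  push_cast
  field_simp
  ring
end
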